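/- arXiv:1903.04148 — 5 statements merged into one kernel-verified Lean document; each statement's English description precedes it below -/
import Mathlib

section
/- If a spherically convex body C ⊂ S^d satisfies Δ(C) = diam(C) and this common value is at most π/2, then C is a body of constant width w = Δ(C) = diam(C), i.e. width_K(C) = w for every hemisphere K supporting C. -/
open scoped RealInnerProductSpace

noncomputable section

namespace SphericalGeom

/-- Euclidean space `E^n`. -/
abbrev Esp (n : ℕ) : Type := EuclideanSpace ℝ (Fin n)

/-- The unit sphere centered at the origin of `E^n` (so `S^d` for `n = d+1`). -/
def unitSphere (n : ℕ) : Set (Esp n) := Metric.sphere 0 1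

/-- Spherical (geodesic) distance between points of the unit sphere. -/
def sdist {n : ℕ} (a b : Esp n) : ℝ := Real.arccos ⟪a, b⟫

/-- The hemisphere `H(c)` with center `c`: points of the sphere within spherical
distance `π/2` from `c`. -/
def hemi {n : ℕ} (c : Esp n) : Set (Esp n) :=
  {x ∈ unitSphere n | sdist c x ≤ Real.pi / 2}

/-- The boundary great subsphere of the hemisphere centered at `c`. -/
def hemiBd {n : ℕ} (c : Esp n) : Set (Esp n) :=
  {x ∈ unitSphere n | sdist c x = Real.pi / 2}

/-- The spherical arc connecting `a` and `b` (for non-antipodal `a b` of the sphere,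
this is the shorter great-circle arc joining them). -/
def arc {n : ℕ} (a b : Esp n) : Set (Esp n) :=
  {z | ∃ s t : ℝ, 0 ≤ s ∧ 0 ≤ t ∧ s • a + t • b ≠ 0 ∧
    z = ‖s • a + t • b‖⁻¹ • (s • a + t • b)}

/-- A subset of the sphere, containing no pair of antipodes, which together with
every two of its points contains the arc connecting them. -/
def IsSphConvex {n : ℕ} (C : Set (Esp n)) : Prop :=
  C ⊆ unitSphere n ∧ (∀ x ∈ C, -x ∉ C) ∧ ∀ a ∈ C, ∀ b ∈ C, arc a b ⊆ C

/-- A spherically convex body: a closed spherically convex set with nonempty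
interior relative to the sphere. -/
def IsSphConvexBody {n : ℕ} (C : Set (Esp n)) : Prop :=
  IsClosed C ∧ IsSphConvex C ∧
    ∃ x ∈ C, ∃ ε : ℝ, 0 < ε ∧ Metric.ball x ε ∩ unitSphere n ⊆ C

/-- The hemisphere centered at `k` supports `C`: it contains `C` and its boundary
meets `C`. -/
def Supports {n : ℕ} (k : Esp n) (C : Set (Esp n)) : Prop :=
  k ∈ unitSphere n ∧ C ⊆ hemi k ∧ ∃ p ∈ C, sdist k p = Real.pi / 2

/-- The hemispheres centered at `g` and `h` are different and not opposite, so that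
`H(g) ∩ H(h)` is a lune. -/
def IsLunePair {n : ℕ} (g h : Esp n) : Prop :=
  g ∈ unitSphere n ∧ h ∈ unitSphere n ∧ g ≠ h ∧ g ≠ -h

/-- The center of the bounding `(d-1)`-dimensional hemisphere `H(g)/H(h)` of the
lune `H(g) ∩ H(h)`: the normalized projection of `h` onto the hyperplane `g^⊥`. -/
def luneFaceCenter {n : ℕ} (g h : Esp n) : Esp n :=
  ‖h - ⟪g, h⟫ • g‖⁻¹ • (h - ⟪g, h⟫ • g)

/-- The thickness of the lune `H(g) ∩ H(h)`: the spherical distance between the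
centers of its two bounding hemispheres. -/
def luneThickness {n : ℕ} (g h : Esp n) : ℝ :=
  sdist (luneFaceCenter g h) (luneFaceCenter h g)

/-- The set of corners of the lune `H(g) ∩ H(h)`, i.e. `(G/H) ∩ (H/G)`. -/
def luneCorners {n : ℕ} (g h : Esp n) : Set (Esp n) := hemiBd g ∩ hemiBd h

/-- The width of `C` determined by the supporting hemisphere `H(k)`: the minimum
thickness of a lune `H(k) ∩ K'` over all hemispheres `K' ≠ H(k)` supporting `C`. -/
def widthAt {n : ℕ} (C : Set (Esp n)) (k : Esp n) : ℝ :=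
  sInf {t | ∃ k', Supports k' C ∧ k' ≠ k ∧ k' ≠ -k ∧ t = luneThickness k k'}

/-- The thickness `Δ(C)`: the minimum of `width_K(C)` over supporting hemispheres. -/
def thickness {n : ℕ} (C : Set (Esp n)) : ℝ :=
  sInf {t | ∃ k, Supports k C ∧ t = widthAt C k}

/-- The spherical diameter: the maximum spherical distance of two points of `C`. -/
def sdiam {n : ℕ} (C : Set (Esp n)) : ℝ :=
  sSup {t | ∃ p ∈ C, ∃ q ∈ C, t = sdist p q}

/-- `C` is of constant width `w`. -/
def IsConstWidth {n : ℕ} (C : Set (Esp n)) (w : ℝ) : Prop :=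
  ∀ k, Supports k C → widthAt C k = w

/-- A reduced body: every convex body properly contained in it has strictly
smaller thickness. -/
def IsReduced {n : ℕ} (R : Set (Esp n)) : Prop :=
  IsSphConvexBody R ∧ ∀ Z : Set (Esp n), IsSphConvexBody Z → Z ⊆ R → Z ≠ R →
    thickness Z < thickness R

/-- `e` is an extreme point of the convex body `C`: `C \ {e}` is convex. -/
def IsExtremePt {n : ℕ} (C : Set (Esp n)) (e : Esp n) : Prop :=
  e ∈ C ∧ IsSphConvex (C \ {e})

/-- The boundary of `C` relative to the sphere. -/
def sphBoundary {n : ℕ} (C : Set (Esp n)) : Set (Esp n) :=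
  closure C ∩ closure (unitSphere n \ C)

/-- `D` is of constant diameter `δ`: its diameter equals `δ` and every boundary
point realizes the distance `δ` to some boundary point. -/
def IsConstDiameter {n : ℕ} (D : Set (Esp n)) (δ : ℝ) : Prop :=
  sdiam D = δ ∧ ∀ p ∈ sphBoundary D, ∃ p' ∈ sphBoundary D, sdist p p' = δ

end SphericalGeom

open SphericalGeom Real

section AuxLemmas

open Real

variable {n : ℕ}

lemma norm_of_mem_unitSphere {x : Esp n} (h : x ∈ unitSphere n) : ‖x‖ = 1 := by
  simpa [unitSphere, dist_zero_right] using h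

lemma mem_unitSphere_of_norm {x : Esp n} (h : ‖x‖ = 1) : x ∈ unitSphere n := by
  simpa [unitSphere, dist_zero_right] using h

lemma abs_inner_le_one_of_units {x y : Esp n} (hx : ‖x‖ = 1) (hy : ‖y‖ = 1) :
    |⟪x, y⟫| ≤ 1 := by
  have := abs_real_inner_le_norm x y
  rwa [hx, hy, mul_one] at this

lemma norm_combo {k p : Esp n} (hk : ‖k‖ = 1) (hp : ‖p‖ = 1) (hkp : ⟪k, p⟫ = 0)
    {a b : ℝ} (hab : a ^ 2 + b ^ 2 = 1) : ‖a • k + b • p‖ = 1 := by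
  have h2 : ‖a • k + b • p‖ ^ 2 = 1 := by
    rw [norm_add_sq_real, real_inner_smul_left, real_inner_smul_right, hkp,
      norm_smul, norm_smul, hk, hp]
    simp only [mul_zero, mul_one, Real.norm_eq_abs]
    rw [sq_abs, sq_abs]
    linarith
  nlinarith [norm_nonneg (a • k + b • p)]

lemma bessel_aux {k p x : Esp n} (hk : ‖k‖ = 1) (hp : ‖p‖ = 1) (hx : ‖x‖ = 1)
    (hkp : ⟪k, p⟫ = 0) : ⟪k, x⟫ ^ 2 + ⟪p, x⟫ ^ 2 ≤ 1 := by
  set a := ⟪k, x⟫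
  set b := ⟪p, x⟫
  have hv : ‖a • k + b • p‖ ^ 2 = a ^ 2 + b ^ 2 := by
    rw [norm_add_sq_real, real_inner_smul_left, real_inner_smul_right, hkp,
      norm_smul, norm_smul, hk, hp]
    simp only [mul_zero, mul_one, Real.norm_eq_abs]
    rw [sq_abs, sq_abs]
    ring
  have hxv : ⟪x, a • k + b • p⟫ = a ^ 2 + b ^ 2 := by
    rw [inner_add_right, real_inner_smul_right, real_inner_smul_right,
      real_inner_comm k x, real_inner_comm p x]
    ring
  have h0 : (0 : ℝ) ≤ ‖x - (a • k + b • p)‖ ^ 2 := sq_nonneg _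
  rw [norm_sub_sq_real, hxv, hv, hx] at h0
  nlinarith

lemma luneThickness_eq_arccos_neg_inner {g h : Esp n} (hg : ‖g‖ = 1) (hh : ‖h‖ = 1)
    (hsq : ⟪g, h⟫ ^ 2 < 1) : luneThickness g h = Real.arccos (-⟪g, h⟫) := by
  have hch : ⟪h, g⟫ = ⟪g, h⟫ := real_inner_comm g h
  have hg2 : ⟪g, g⟫ = 1 := by rw [real_inner_self_eq_norm_sq, hg]; norm_num
  have hh2 : ⟪h, h⟫ = 1 := by rw [real_inner_self_eq_norm_sq, hh]; norm_num
  set c : ℝ := ⟪g, h⟫ with hc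
  have hpos : (0 : ℝ) < 1 - c ^ 2 := by linarith
  have hu2 : ‖h - c • g‖ ^ 2 = 1 - c ^ 2 := by
    rw [norm_sub_sq_real, real_inner_smul_right, norm_smul, hg, hh, hch]
    simp only [mul_one, Real.norm_eq_abs]
    rw [sq_abs]
    ring
  have hv2 : ‖g - c • h‖ ^ 2 = 1 - c ^ 2 := by
    rw [norm_sub_sq_real, real_inner_smul_right, norm_smul, hg, hh, ← hc]
    simp only [mul_one, Real.norm_eq_abs]
    rw [sq_abs]
    ring
  have hun : ‖h - c • g‖ = Real.sqrt (1 - c ^ 2) := by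
    rw [← hu2]; exact (Real.sqrt_sq (norm_nonneg _)).symm
  have hvn : ‖g - c • h‖ = Real.sqrt (1 - c ^ 2) := by
    rw [← hv2]; exact (Real.sqrt_sq (norm_nonneg _)).symm
  have huv : ⟪h - c • g, g - c • h⟫ = -c * (1 - c ^ 2) := by
    rw [inner_sub_left, inner_sub_right, inner_sub_right, real_inner_smul_left,
      real_inner_smul_left, real_inner_smul_right, real_inner_smul_right,
      hch, hg2, hh2, ← hc]
    ring
  have hsqrtpos : 0 < Real.sqrt (1 - c ^ 2) := Real.sqrt_pos.mpr hpos
  have hfc : ⟪luneFaceCenter g h, luneFaceCenter h g⟫ = -c := by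
    show ⟪‖h - ⟪g, h⟫ • g‖⁻¹ • (h - ⟪g, h⟫ • g), ‖g - ⟪h, g⟫ • h‖⁻¹ • (g - ⟪h, g⟫ • h)⟫ = -c
    rw [hch, ← hc, real_inner_smul_left, real_inner_smul_right, huv, hun, hvn]
    have h1 : Real.sqrt (1 - c ^ 2) * Real.sqrt (1 - c ^ 2) = 1 - c ^ 2 :=
      Real.mul_self_sqrt (le_of_lt hpos)
    field_simp
    rw [Real.sq_sqrt (le_of_lt hpos)]
  show sdist (luneFaceCenter g h) (luneFaceCenter h g) = Real.arccos (-c)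
  rw [sdist, hfc]

set_option maxHeartbeats 1000000 in
lemma exists_far_support {C : Set (Esp n)} (hC : IsSphConvexBody C)
    (hdle : sdiam C ≤ Real.pi / 2) {k : Esp n} (hk : Supports k C) :
    ∃ k', Supports k' C ∧ k' ≠ k ∧ k' ≠ -k ∧ luneThickness k k' ≤ sdiam C := by
  obtain ⟨hclosed, hconv, x₁, hx₁C, ε, hε, hball⟩ := hC
  have hCsub : C ⊆ unitSphere n := hconv.1
  obtain ⟨hkS, hsub, p, hpC, hpd⟩ := hk
  have hknorm : ‖k‖ = 1 := norm_of_mem_unitSphere hkS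
  have hpnorm : ‖p‖ = 1 := norm_of_mem_unitSphere (hCsub hpC)
  have hkp : ⟪k, p⟫ = 0 := by
    have h := hpd
    simp only [sdist] at h
    exact Real.arccos_eq_pi_div_two.mp h
  have hinner_nonneg : ∀ x ∈ C, 0 ≤ ⟪k, x⟫ := by
    intro x hx
    have h := (hsub hx).2
    simp only [sdist] at h
    exact Real.arccos_le_pi_div_two.mp h
  set w := sdiam C with hwdef
  have hw0 : 0 ≤ w := by
    rw [hwdef]
    simp only [sdiam]
    refine Real.sSup_nonneg ?_
    rintro t ⟨a, -, b, -, rfl⟩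
    exact Real.arccos_nonneg _
  have hwpi : w ≤ Real.pi := le_trans hdle (by linarith [Real.pi_pos])
  have hdiam : ∀ x ∈ C, ∀ y ∈ C, sdist x y ≤ w := by
    intro x hx y hy
    rw [hwdef]
    simp only [sdiam]
    refine le_csSup ⟨Real.pi, ?_⟩ ⟨x, hx, y, hy, rfl⟩
    rintro t ⟨a, -, b, -, rfl⟩
    exact Real.arccos_le_pi _
  have hcw : 0 ≤ Real.cos w := Real.cos_nonneg_of_mem_Icc ⟨by linarith [Real.pi_pos], hdle⟩
  have hsw : 0 ≤ Real.sin w := Real.sin_nonneg_of_nonneg_of_le_pi hw0 hwpi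
  have hpx : ∀ x ∈ C, Real.cos w ≤ ⟪p, x⟫ := by
    intro x hx
    have hd := hdiam p hpC x hx
    simp only [sdist] at hd
    have hb := abs_le.mp (abs_inner_le_one_of_units hpnorm (norm_of_mem_unitSphere (hCsub hx)))
    have h1 : Real.cos w ≤ Real.cos (Real.arccos ⟪p, x⟫) :=
      Real.cos_le_cos_of_nonneg_of_le_pi (Real.arccos_nonneg _) hwpi hd
    rwa [Real.cos_arccos hb.1 hb.2] at h1
  have hkx : ∀ x ∈ C, ⟪k, x⟫ ≤ Real.sin w := by
    intro x hx
    have hbes := bessel_aux hknorm hpnorm (norm_of_mem_unitSphere (hCsub hx)) hkp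
    have hpx' := hpx x hx
    have hsin2 : Real.sin w ^ 2 = 1 - Real.cos w ^ 2 := by
      nlinarith [Real.sin_sq_add_cos_sq w]
    nlinarith [hinner_nonneg x hx]
  -- a point with positive inner product with k
  have hx0 : ∃ x₀ ∈ C, 0 < ⟪k, x₀⟫ := by
    rcases (hinner_nonneg x₁ hx₁C).lt_or_eq with hpos | h0
    · exact ⟨x₁, hx₁C, hpos⟩
    · set δ := min (ε / 2) 1 with hδdef
      have hδ0 : 0 < δ := lt_min (by linarith) one_pos
      have hδ1 : δ ≤ 1 := min_le_right _ _
      have hδε : δ ≤ ε / 2 := min_le_left _ _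
      have hx₁n : ‖x₁‖ = 1 := norm_of_mem_unitSphere (hCsub hx₁C)
      have hx₁k : ⟪x₁, k⟫ = 0 := by rw [real_inner_comm]; exact h0.symm
      set y := Real.cos δ • x₁ + Real.sin δ • k with hy
      have hyn : ‖y‖ = 1 :=
        norm_combo hx₁n hknorm hx₁k (by nlinarith [Real.sin_sq_add_cos_sq δ])
      have hyx : ‖y - x₁‖ < ε := by
        have hrw : y - x₁ = (Real.cos δ - 1) • x₁ + Real.sin δ • k := by
          rw [hy]; module
        rw [hrw]
        have h1 : ‖(Real.cos δ - 1) • x₁‖ = 1 - Real.cos δ := by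
          rw [norm_smul, hx₁n, mul_one, Real.norm_eq_abs,
            abs_of_nonpos (by linarith [Real.cos_le_one δ])]
          ring
        have h2 : ‖Real.sin δ • k‖ = Real.sin δ := by
          rw [norm_smul, hknorm, mul_one, Real.norm_eq_abs,
            abs_of_nonneg (Real.sin_nonneg_of_nonneg_of_le_pi hδ0.le
              (by linarith [Real.pi_gt_three]))]
        refine lt_of_le_of_lt (norm_add_le _ _) ?_
        rw [h1, h2]
        have h3 : 1 - Real.cos δ ≤ δ ^ 2 / 2 := by
          linarith [Real.one_sub_sq_div_two_le_cos (x := δ)]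
        have h4 : Real.sin δ ≤ δ := Real.sin_le hδ0.le
        nlinarith
      have hymem : y ∈ C := by
        apply hball
        exact ⟨by rw [Metric.mem_ball, dist_eq_norm]; exact hyx, mem_unitSphere_of_norm hyn⟩
      refine ⟨y, hymem, ?_⟩
      have hky : ⟪k, y⟫ = Real.sin δ := by
        rw [hy, inner_add_right, real_inner_smul_right, real_inner_smul_right,
          ← h0, real_inner_self_eq_norm_sq, hknorm]
        ring
      rw [hky]
      exact Real.sin_pos_of_pos_of_lt_pi hδ0 (lt_of_le_of_lt hδ1 (by linarith [Real.pi_gt_three]))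
  obtain ⟨x₀, hx₀C, hx₀⟩ := hx0
  have hcomp : IsCompact C :=
    (isCompact_sphere (0 : Esp n) 1).of_isClosed_subset hclosed hCsub
  have hCne : C.Nonempty := ⟨p, hpC⟩
  -- the set of admissible rotation angles
  set S : Set ℝ := {θ | θ ∈ Set.Icc 0 w ∧
      ∀ x ∈ C, 0 ≤ -Real.cos θ * ⟪k, x⟫ + Real.sin θ * ⟪p, x⟫} with hSdef
  have hSclosed : IsClosed S := by
    have hrw : S = Set.Icc 0 w ∩
        ⋂ x ∈ C, {θ : ℝ | 0 ≤ -Real.cos θ * ⟪k, x⟫ + Real.sin θ * ⟪p, x⟫} := by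
      ext θ
      simp only [hSdef, Set.mem_setOf_eq, Set.mem_inter_iff, Set.mem_iInter]
    rw [hrw]
    refine isClosed_Icc.inter (isClosed_biInter fun x hx => ?_)
    exact isClosed_le continuous_const
      (((Real.continuous_cos.neg.mul continuous_const)).add
        (Real.continuous_sin.mul continuous_const))
  have hwS : w ∈ S := by
    refine ⟨⟨hw0, le_refl w⟩, fun x hx => ?_⟩
    nlinarith [hkx x hx, hpx x hx, hinner_nonneg x hx]
  have hSbdd : BddBelow S := ⟨0, fun θ hθ => hθ.1.1⟩
  set θs := sInf S with hθsdef
  have hθsS : θs ∈ S := hSclosed.csInf_mem ⟨w, hwS⟩ hSbdd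
  have hθs0 : 0 ≤ θs := hθsS.1.1
  have hθsw : θs ≤ w := hθsS.1.2
  have hθspos : 0 < θs := by
    rcases hθs0.lt_or_eq with h | h
    · exact h
    · exfalso
      have h2 := hθsS.2 x₀ hx₀C
      rw [← h] at h2
      simp only [Real.cos_zero, Real.sin_zero] at h2
      linarith
  have htouch : ∃ q ∈ C, -Real.cos θs * ⟪k, q⟫ + Real.sin θs * ⟪p, q⟫ = 0 := by
    by_contra hno
    push_neg at hno
    have hcont : Continuous fun x : Esp n =>
        -Real.cos θs * ⟪k, x⟫ + Real.sin θs * ⟪p, x⟫ := by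
      exact (continuous_const.mul (continuous_const.inner continuous_id)).add
        (continuous_const.mul (continuous_const.inner continuous_id))
    obtain ⟨q, hqC, hq⟩ := hcomp.exists_isMinOn hCne hcont.continuousOn
    set m := -Real.cos θs * ⟪k, q⟫ + Real.sin θs * ⟪p, q⟫ with hmdef
    have hm0 : 0 < m := lt_of_le_of_ne (hθsS.2 q hqC) (Ne.symm (hno q hqC))
    have hgcont : Continuous fun θ : ℝ =>
        |Real.cos θ - Real.cos θs| + |Real.sin θ - Real.sin θs| :=
      ((Real.continuous_cos.sub continuous_const).abs).add
        ((Real.continuous_sin.sub continuous_const).abs)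
    have hev : ∀ᶠ θ in nhds θs,
        |Real.cos θ - Real.cos θs| + |Real.sin θ - Real.sin θs| < m := by
      have h0 := hgcont.tendsto θs
      simp only [sub_self, abs_zero, add_zero] at h0
      exact h0.eventually_lt_const hm0
    obtain ⟨δ, hδ0, hδ⟩ := Metric.eventually_nhds_iff.mp hev
    set θ' := max (θs - δ / 2) 0 with hθ'def
    have hθ'le : θ' ≤ θs := max_le (by linarith) hθs0
    have hθ'ge : θs - δ / 2 ≤ θ' := le_max_left _ _
    have hdist : dist θ' θs < δ := by
      rw [Real.dist_eq, abs_of_nonpos (by linarith)]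
      linarith
    have hg := hδ hdist
    have hθ'S : θ' ∈ S := by
      refine ⟨⟨le_max_right _ _, le_trans hθ'le hθsw⟩, fun x hx => ?_⟩
      have hxn : ‖x‖ = 1 := norm_of_mem_unitSphere (hCsub hx)
      have h1 : |(Real.cos θ' - Real.cos θs) * ⟪k, x⟫| ≤ |Real.cos θ' - Real.cos θs| := by
        rw [abs_mul]
        exact mul_le_of_le_one_right (abs_nonneg _) (abs_inner_le_one_of_units hknorm hxn)
      have h2 : |(Real.sin θ' - Real.sin θs) * ⟪p, x⟫| ≤ |Real.sin θ' - Real.sin θs| := by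
        rw [abs_mul]
        exact mul_le_of_le_one_right (abs_nonneg _) (abs_inner_le_one_of_units hpnorm hxn)
      have hmin : m ≤ -Real.cos θs * ⟪k, x⟫ + Real.sin θs * ⟪p, x⟫ := isMinOn_iff.mp hq x hx
      have e1 := le_abs_self ((Real.cos θ' - Real.cos θs) * ⟪k, x⟫)
      have e2 := neg_abs_le ((Real.sin θ' - Real.sin θs) * ⟪p, x⟫)
      linarith [hg, hmin, h1, h2, e1, e2]
    have hle1 : θs ≤ θ' := csInf_le hSbdd hθ'S
    have hlt1 : θ' < θs := max_lt (by linarith) hθspos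
    linarith
  obtain ⟨q, hqC, hq0⟩ := htouch
  set k' := (-Real.cos θs) • k + Real.sin θs • p with hk'def
  have hk'n : ‖k'‖ = 1 :=
    norm_combo hknorm hpnorm hkp (by nlinarith [Real.sin_sq_add_cos_sq θs])
  have hinner_k' : ∀ x : Esp n, ⟪k', x⟫ = -Real.cos θs * ⟪k, x⟫ + Real.sin θs * ⟪p, x⟫ := by
    intro x
    rw [hk'def, inner_add_left, real_inner_smul_left, real_inner_smul_left]
  have hsupp : Supports k' C := by
    refine ⟨mem_unitSphere_of_norm hk'n, fun x hx => ⟨hCsub hx, ?_⟩, q, hqC, ?_⟩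
    · show sdist k' x ≤ Real.pi / 2
      simp only [sdist]
      rw [hinner_k' x]
      exact Real.arccos_le_pi_div_two.mpr (hθsS.2 x hx)
    · show sdist k' q = Real.pi / 2
      simp only [sdist]
      rw [hinner_k' q]
      exact Real.arccos_eq_pi_div_two.mpr hq0
  have hkk' : ⟪k, k'⟫ = -Real.cos θs := by
    rw [hk'def, inner_add_right, real_inner_smul_right, real_inner_smul_right, hkp,
      real_inner_self_eq_norm_sq, hknorm]
    ring
  have hcos1 : Real.cos θs < 1 := by
    by_contra hcon
    push_neg at hcon
    have h1 : Real.cos θs = 1 := le_antisymm (Real.cos_le_one _) hcon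
    have h2 := Real.arccos_cos hθs0 (le_trans hθsw hwpi)
    rw [h1, Real.arccos_one] at h2
    linarith
  have hcosnn : 0 ≤ Real.cos θs :=
    Real.cos_nonneg_of_mem_Icc ⟨by linarith [Real.pi_pos], by linarith⟩
  have hne1 : k' ≠ k := by
    intro hcon
    rw [hcon, real_inner_self_eq_norm_sq, hknorm] at hkk'
    norm_num at hkk'
    linarith
  have hne2 : k' ≠ -k := by
    intro hcon
    rw [hcon, inner_neg_right, real_inner_self_eq_norm_sq, hknorm] at hkk'
    norm_num at hkk'
    linarith
  have hsq : ⟪k, k'⟫ ^ 2 < 1 := by rw [hkk']; nlinarith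
  have hlune : luneThickness k k' = θs := by
    rw [luneThickness_eq_arccos_neg_inner hknorm hk'n hsq, hkk', neg_neg]
    exact Real.arccos_cos hθs0 (le_trans hθsw hwpi)
  exact ⟨k', hsupp, hne1, hne2, by rw [hlune]; exact hθsw⟩

end AuxLemmas


/-- If a spherically convex body `C ⊂ S^d` satisfies
`Δ(C) = diam(C) ≤ π/2`, then `C` is of constant width `w = Δ(C) = diam(C)`. -/
theorem constWidth_of_thickness_eq_sdiam (d : ℕ) (hd : 2 ≤ d)
    (C : Set (Esp (d + 1))) (hC : IsSphConvexBody C)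
    (heq : thickness C = sdiam C) (hle : thickness C ≤ Real.pi / 2) :
    IsConstWidth C (thickness C) := by
  intro k hk
  have hd2 : sdiam C ≤ Real.pi / 2 := heq ▸ hle
  obtain ⟨k', hs', hne1, hne2, hlune⟩ := exists_far_support hC hd2 hk
  have h1 : widthAt C k ≤ sdiam C := by
    refine le_trans (csInf_le ?_ ?_) hlune
    · refine ⟨0, fun t ht => ?_⟩
      obtain ⟨k'', -, -, -, rfl⟩ := ht
      exact Real.arccos_nonneg _
    · exact ⟨k', hs', hne1, hne2, rfl⟩
  have h2 : thickness C ≤ widthAt C k := by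
    apply csInf_le
    · refine ⟨0, fun t ht => ?_⟩
      obtain ⟨k₀, hk₀, rfl⟩ := ht
      refine Real.sInf_nonneg fun t ht => ?_
      obtain ⟨k'', -, -, -, rfl⟩ := ht
      exact Real.arccos_nonneg _
    · exact ⟨k, hk, rfl⟩
  linarith [heq]
end
end

section
/- Let L ⊂ S^d be a lune and let C ⊂ L be a spherically convex body such that F = C ∩ corn(L) is non-empty, where corn(L) is the set of corners of L. Then at least one extreme point of C lies in corn(L). -/
open scoped RealInnerProductSpace

noncomputable section

namespace SphericalGeom

/-- Convex hull of a compact set in finite dimensions is compact. -/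
lemma isCompact_convexHull_aux {n : ℕ} {s : Set (Esp n)} (hs : IsCompact s)
    (hne : s.Nonempty) : IsCompact (convexHull ℝ s) := by
  classical
  obtain ⟨z₀, hz₀⟩ := hne
  set N := Module.finrank ℝ (Esp n) + 1 with hN
  set f : (Fin N → ℝ) × (Fin N → Esp n) → Esp n := fun p => ∑ i, p.1 i • p.2 i with hf
  have hT : IsCompact ((stdSimplex ℝ (Fin N)) ×ˢ (Set.univ.pi fun _ : Fin N => s)) :=
    (isCompact_stdSimplex ℝ _).prod (isCompact_univ_pi fun _ => hs)
  have hcont : Continuous f := by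
    apply continuous_finset_sum
    intro i _
    exact ((continuous_apply i).comp continuous_fst).smul
      ((continuous_apply i).comp continuous_snd)
  have himg : convexHull ℝ s =
      f '' ((stdSimplex ℝ (Fin N)) ×ˢ (Set.univ.pi fun _ : Fin N => s)) := by
    apply Set.Subset.antisymm
    · intro x hx
      obtain ⟨ι, hfin, z, w, hzs, hind, hwpos, hwsum, hxsum⟩ :=
        eq_pos_convex_span_of_mem_convexHull hx
      have hcard : Fintype.card ι ≤ N := by
        have h1 := hind.card_le_finrank_succ
        have h2 : Module.finrank ℝ (vectorSpan ℝ (Set.range z)) ≤ Module.finrank ℝ (Esp n) :=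
          Submodule.finrank_le _
        simp only [hN]
        omega
      set k := Fintype.card ι with hk
      set e := Fintype.equivFin ι with he
      -- ℕ-indexed versions
      set W : ℕ → ℝ := fun m => if h : m < k then w (e.symm ⟨m, h⟩) else 0 with hW
      set Z : ℕ → Esp n := fun m => if h : m < k then z (e.symm ⟨m, h⟩) else z₀ with hZ
      have key : ∀ (M : Type) (_ : AddCommMonoid M) (F : ι → M),
          (∑ j : Fin N, (if h : (j : ℕ) < k then F (e.symm ⟨j, h⟩) else 0)) = ∑ i, F i := by
        intro M _ F
        rw [Fin.sum_univ_eq_sum_range (fun m => if h : m < k then F (e.symm ⟨m, h⟩) else 0) N]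
        rw [← Finset.sum_subset (Finset.range_subset_range.2 hcard)]
        · rw [← Fin.sum_univ_eq_sum_range (fun m => if h : m < k then F (e.symm ⟨m, h⟩) else 0) k]
          rw [Fintype.sum_equiv e.symm _ F]
          intro j
          simp [j.isLt]
        · intro m _ hm
          rw [dif_neg (by simpa using hm)]
      refine ⟨(fun j : Fin N => W j, fun j : Fin N => Z j), ⟨?_, ?_⟩, ?_⟩
      · constructor
        · intro j
          by_cases h : (j : ℕ) < k
          · simp only [hW, dif_pos h]
            exact le_of_lt (hwpos _)
          · simp [hW, dif_neg h]
        · rw [← hwsum]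
          exact key ℝ _ w
      · intro j _
        by_cases h : (j : ℕ) < k
        · simp only [hZ, dif_pos h]
          exact hzs (Set.mem_range_self _)
        · simpa [hZ, dif_neg h] using hz₀
      · simp only [hf]
        rw [← hxsum]
        have : ∀ j : Fin N, W j • Z j =
            (if h : (j : ℕ) < k then (fun i => w i • z i) (e.symm ⟨j, h⟩) else 0) := by
          intro j
          by_cases h : (j : ℕ) < k <;> simp [hW, hZ, h]
        rw [Finset.sum_congr rfl fun j _ => this j]
        exact key (Esp n) _ (fun i => w i • z i)
    · rintro x ⟨⟨w, z⟩, ⟨hw, hz⟩, rfl⟩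
      have := Finset.centerMass_mem_convexHull (t := (Finset.univ : Finset (Fin N)))
        (w := w) (z := z) (hw₀ := fun i _ => hw.1 i)
        (hws := by rw [hw.2]; norm_num) (hz := fun i _ => hz i (Set.mem_univ i))
      rwa [Finset.centerMass_eq_of_sum_1 _ _ hw.2] at this
  rw [himg]
  exact hT.image hcont

lemma collapse_aux {n : ℕ} {F : Set (Esp n)}
    (hFs : ∀ x ∈ F, ‖x‖ = 1)
    (hanti : ∀ x ∈ F, -x ∉ F)
    (harc : ∀ a ∈ F, ∀ b ∈ F, ∀ s t : ℝ, 0 < s → 0 < t →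
      s • a + t • b ≠ 0 → ‖s • a + t • b‖⁻¹ • (s • a + t • b) ∈ F) :
    ∀ (m : ℕ) (l : List (ℝ × Esp n)), l.length = m → l ≠ [] →
      (∀ p ∈ l, 0 < p.1 ∧ p.2 ∈ F) → (l.map fun p => p.1 • p.2).sum ≠ 0 := by
  intro m
  induction m using Nat.strong_induction_on with
  | _ m IH =>
    intro l hlen hne hmem h0
    rcases l with _ | ⟨p, _ | ⟨q, rest⟩⟩
    · exact hne rfl
    ·
      simp only [List.map_cons, List.map_nil, List.sum_cons, List.sum_nil, add_zero] at h0
      have hp := hmem p (by simp)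
      have : p.2 = 0 := by
        rcases smul_eq_zero.1 h0 with h | h
        · exact absurd h (ne_of_gt hp.1)
        · exact h
      have h1 := hFs p.2 hp.2
      rw [this] at h1
      simp at h1
    ·
      have hp := hmem p (by simp)
      have hq := hmem q (by simp)
      set v := p.1 • p.2 + q.1 • q.2 with hv
      by_cases hv0 : v = 0
      · -- antipodes
        have h1 : p.1 • p.2 = -(q.1 • q.2) := by
          rw [eq_neg_iff_add_eq_zero]; exact hv0
        have hnorm : p.1 = q.1 := by
          have := congrArg norm h1
          rw [norm_neg, norm_smul, norm_smul, hFs p.2 hp.2, hFs q.2 hq.2,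
            Real.norm_eq_abs, Real.norm_eq_abs, abs_of_pos hp.1, abs_of_pos hq.1] at this
          simpa using this
        have h2 : p.2 = -q.2 := by
          have : p.1 • p.2 = p.1 • (-q.2) := by rw [h1, hnorm, smul_neg]
          exact smul_right_injective (Esp n) (ne_of_gt hp.1) this
        exact hanti q.2 hq.2 (h2 ▸ hp.2)
      · have hy : ‖v‖⁻¹ • v ∈ F :=
          harc p.2 hp.2 q.2 hq.2 p.1 q.1 hp.1 hq.1 hv0
        have hvn : (0:ℝ) < ‖v‖ := norm_pos_iff.2 hv0
        set l' : List (ℝ × Esp n) := (‖v‖, ‖v‖⁻¹ • v) :: rest with hl'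
        have hsum : (l'.map fun p => p.1 • p.2).sum
            = ((p :: q :: rest).map fun p => p.1 • p.2).sum := by
          simp only [hl', List.map_cons, List.sum_cons]
          rw [smul_inv_smul₀ (ne_of_gt hvn), hv, add_assoc]
        have hlen' : l'.length < m := by
          simp only [hl', List.length_cons] at *
          omega
        exact IH l'.length hlen' l' rfl (by simp [hl'])
          (by
            intro r hr
            rcases List.mem_cons.1 hr with h | h
            · subst h; exact ⟨hvn, hy⟩
            · exact hmem r (by simp [h]))
          (by rw [hsum]; exact h0)


lemma zero_not_mem_hull {n : ℕ} {F : Set (Esp n)}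
    (hFs : ∀ x ∈ F, ‖x‖ = 1)
    (hanti : ∀ x ∈ F, -x ∉ F)
    (harc : ∀ a ∈ F, ∀ b ∈ F, ∀ s t : ℝ, 0 < s → 0 < t →
      s • a + t • b ≠ 0 → ‖s • a + t • b‖⁻¹ • (s • a + t • b) ∈ F)
    (collapse : ∀ (m : ℕ) (l : List (ℝ × Esp n)), l.length = m → l ≠ [] →
      (∀ p ∈ l, 0 < p.1 ∧ p.2 ∈ F) → (l.map fun p => p.1 • p.2).sum ≠ 0) :
    (0 : Esp n) ∉ convexHull ℝ F := by
  classical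
  intro h0
  rw [convexHull_eq] at h0
  obtain ⟨ι, t, w, z, hw0, hw1, hzF, hcm⟩ := h0
  rw [Finset.centerMass_eq_of_sum_1 _ _ hw1] at hcm
  set t' := t.filter (fun i => 0 < w i) with ht'
  have ht'ne : t'.Nonempty := by
    by_contra hemp
    rw [Finset.not_nonempty_iff_eq_empty] at hemp
    have : ∑ i ∈ t, w i = 0 := by
      apply Finset.sum_eq_zero
      intro i hi
      by_contra hwi
      have : i ∈ t' := Finset.mem_filter.2 ⟨hi, lt_of_le_of_ne (hw0 i hi) (Ne.symm hwi)⟩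
      rw [hemp] at this
      exact absurd this (Finset.notMem_empty i)
    rw [hw1] at this
    norm_num at this
  set l : List (ℝ × Esp n) := t'.toList.map (fun i => (w i, z i)) with hl
  have hlne : l ≠ [] := by
    simp only [hl, ne_eq, List.map_eq_nil_iff, Finset.toList_eq_nil]
    exact ht'ne.ne_empty
  have hlmem : ∀ p ∈ l, 0 < p.1 ∧ p.2 ∈ F := by
    intro p hp
    simp only [hl, List.mem_map, Finset.mem_toList] at hp
    obtain ⟨i, hi, rfl⟩ := hp
    rw [ht', Finset.mem_filter] at hi
    exact ⟨hi.2, hzF i hi.1⟩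
  refine collapse l.length l rfl hlne hlmem ?_
  have : (l.map fun p => p.1 • p.2).sum = ∑ i ∈ t', w i • z i := by
    rw [hl, List.map_map]
    exact Finset.sum_map_toList t' (fun i => w i • z i) ▸ rfl
  rw [this, ht', Finset.sum_filter_of_ne, hcm]
  intro i _ hne
  rcases smul_ne_zero_iff.1 hne with ⟨hw, _⟩
  exact lt_of_le_of_ne (hw0 i ‹_›) (Ne.symm hw)

lemma min_norm_inner {E : Type*} [NormedAddCommGroup E] [InnerProductSpace ℝ E]
    {K : Set E} (hKc : Convex ℝ K) {u : E}
    (hu : u ∈ K) (hmin : ∀ w ∈ K, ‖u‖ ≤ ‖w‖) :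
    ∀ x ∈ K, ‖u‖ ^ 2 ≤ ⟪u, x⟫ := by
  have hne : Nonempty K := ⟨⟨u, hu⟩⟩
  have heq : ‖(0 : E) - u‖ = ⨅ w : K, ‖(0 : E) - w‖ := by
    apply le_antisymm
    · apply le_ciInf
      intro w
      simpa using hmin w w.2
    · have hb : BddBelow (Set.range fun w : K => ‖(0 : E) - (w : E)‖) := by
        refine ⟨0, ?_⟩
        rintro r ⟨w, rfl⟩
        positivity
      exact ciInf_le hb ⟨u, hu⟩
  have := (norm_eq_iInf_iff_real_inner_le_zero hKc hu).1 heq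
  intro x hx
  have h2 := this x hx
  rw [zero_sub, inner_sub_right, inner_neg_left, inner_neg_left] at h2
  have : ⟪u, u⟫ ≤ ⟪u, x⟫ := by linarith
  rwa [real_inner_self_eq_norm_sq] at this

end SphericalGeom

open SphericalGeom Real

/-- If a spherically convex body `C` contained in a lune `L` meets the
set of corners of `L`, then some extreme point of `C` is a corner of `L`. -/

theorem extreme_point_in_corners (d : ℕ) (hd : 2 ≤ d)
    (g h : Esp (d + 1)) (hL : IsLunePair g h)
    (C : Set (Esp (d + 1))) (hC : IsSphConvexBody C)
    (hCL : C ⊆ hemi g ∩ hemi h)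
    (hF : (C ∩ luneCorners g h).Nonempty) :
    ∃ e ∈ luneCorners g h, IsExtremePt C e := by
  classical
  obtain ⟨hCclosed, hCconv, -⟩ := hC
  obtain ⟨hCs, hCanti, hCarc⟩ := hCconv
  obtain ⟨hg1, hh1, -, -⟩ := hL
  have hgn : ‖g‖ = 1 := mem_sphere_zero_iff_norm.1 hg1
  have hhn : ‖h‖ = 1 := mem_sphere_zero_iff_norm.1 hh1
  set F := C ∩ luneCorners g h with hFdef
  have hCn : ∀ x ∈ C, ‖x‖ = 1 := fun x hx => mem_sphere_zero_iff_norm.1 (hCs hx)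
  have hCg : ∀ x ∈ C, 0 ≤ ⟪g, x⟫ := by
    intro x hx
    have h2 : Real.arccos ⟪g, x⟫ ≤ Real.pi / 2 := ((hCL hx).1).2
    exact Real.arccos_le_pi_div_two.1 h2
  have hCh : ∀ x ∈ C, 0 ≤ ⟪h, x⟫ := by
    intro x hx
    have h2 : Real.arccos ⟪h, x⟫ ≤ Real.pi / 2 := ((hCL hx).2).2
    exact Real.arccos_le_pi_div_two.1 h2
  have hFn : ∀ x ∈ F, ‖x‖ = 1 := fun x hx => hCn x hx.1
  have hbd_inner : ∀ c : Esp (d+1), ‖c‖ = 1 → ∀ x : Esp (d+1), ‖x‖ = 1 →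
      sdist c x = Real.pi / 2 → ⟪c, x⟫ = 0 := by
    intro c hcn x hxn hdist
    have hb : |⟪c, x⟫| ≤ 1 := by
      have := abs_real_inner_le_norm c x
      rwa [hcn, hxn, mul_one] at this
    rcases abs_le.1 hb with ⟨hb1, hb2⟩
    have h2 : Real.arccos ⟪c, x⟫ = Real.pi / 2 := hdist
    have := congrArg Real.cos h2
    rwa [Real.cos_arccos hb1 hb2, Real.cos_pi_div_two] at this
  have hinner_g : ∀ x ∈ F, ⟪g, x⟫ = 0 := by
    intro x hx
    exact hbd_inner g hgn x (hFn x hx) hx.2.1.2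
  have hinner_h : ∀ x ∈ F, ⟪h, x⟫ = 0 := by
    intro x hx
    exact hbd_inner h hhn x (hFn x hx) hx.2.2.2
  have memF : ∀ x ∈ C, ⟪g, x⟫ = 0 → ⟪h, x⟫ = 0 → x ∈ F := by
    intro x hx h1 h2
    refine ⟨hx, ⟨⟨hCs hx, ?_⟩, ⟨hCs hx, ?_⟩⟩⟩
    · show Real.arccos ⟪g, x⟫ = Real.pi / 2
      rw [h1, Real.arccos_zero]
    · show Real.arccos ⟪h, x⟫ = Real.pi / 2
      rw [h2, Real.arccos_zero]
  have hFanti : ∀ x ∈ F, -x ∉ F := fun x hx hnx => hCanti x hx.1 hnx.1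
  have harcF : ∀ a ∈ F, ∀ b ∈ F, ∀ s t : ℝ, 0 < s → 0 < t →
      s • a + t • b ≠ 0 → ‖s • a + t • b‖⁻¹ • (s • a + t • b) ∈ F := by
    intro a ha b hb s t hs ht hv
    set v := s • a + t • b with hvdef
    have hyC : ‖v‖⁻¹ • v ∈ C := hCarc a ha.1 b hb.1 ⟨s, t, hs.le, ht.le, hv, rfl⟩
    have hginner : ⟪g, ‖v‖⁻¹ • v⟫ = 0 := by
      rw [real_inner_smul_right, hvdef, inner_add_right, real_inner_smul_right,
        real_inner_smul_right, hinner_g a ha, hinner_g b hb]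
      ring
    have hhinner : ⟪h, ‖v‖⁻¹ • v⟫ = 0 := by
      rw [real_inner_smul_right, hvdef, inner_add_right, real_inner_smul_right,
        real_inner_smul_right, hinner_h a ha, hinner_h b hb]
      ring
    exact memF _ hyC hginner hhinner
  -- F is compact and nonempty
  have hFne : F.Nonempty := hF
  have hsdcont : ∀ c : Esp (d+1), Continuous (sdist c) := by
    intro c
    exact Real.continuous_arccos.comp (Continuous.inner continuous_const continuous_id)
  have hbdclosed : ∀ c : Esp (d+1), IsClosed (hemiBd c) := by
    intro c
    have heq : hemiBd c = unitSphere (d+1) ∩ (sdist c) ⁻¹' {Real.pi / 2} := rfl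
    rw [heq]
    exact Metric.isClosed_sphere.inter (IsClosed.preimage (hsdcont c) isClosed_singleton)
  have hFclosed : IsClosed F := hCclosed.inter ((hbdclosed g).inter (hbdclosed h))
  have hFcompact : IsCompact F :=
    (isCompact_sphere (0 : Esp (d+1)) 1).of_isClosed_subset hFclosed (fun x hx => hCs hx.1)
  -- 0 is not in the convex hull of F; get a positive linear functional
  have h0 : (0 : Esp (d+1)) ∉ convexHull ℝ F :=
    zero_not_mem_hull hFn hFanti harcF (collapse_aux hFn hFanti harcF)
  have hKcomp : IsCompact (convexHull ℝ F) := isCompact_convexHull_aux hFcompact hFne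
  obtain ⟨u, huK, humin⟩ := hKcomp.exists_isMinOn
    (hFne.mono (subset_convexHull ℝ F)) continuous_norm.continuousOn
  have hineq : ∀ x ∈ convexHull ℝ F, ‖u‖ ^ 2 ≤ ⟪u, x⟫ :=
    min_norm_inner (convex_convexHull ℝ F) huK (fun w hw => humin hw)
  have hu0 : u ≠ 0 := fun hh => h0 (hh ▸ huK)
  have hm0 : 0 < ‖u‖ ^ 2 := pow_pos (norm_pos_iff.2 hu0) 2
  -- minimize the functional over F
  have hfc : Continuous fun x : Esp (d+1) => ⟪u, x⟫ :=
    Continuous.inner continuous_const continuous_id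
  obtain ⟨e, heF, hemin⟩ := hFcompact.exists_isMinOn hFne hfc.continuousOn
  have hfe : 0 < ⟪u, e⟫ := lt_of_lt_of_le hm0 (hineq e (subset_convexHull ℝ F heF))
  -- e is the desired extreme point
  refine ⟨e, heF.2, heF.1, fun x hx => hCs hx.1, fun x hx hnx => hCanti x hx.1 hnx.1, ?_⟩
  rintro a ha b hb z ⟨s, t, hs, ht, hv, rfl⟩
  have haC : a ∈ C := ha.1
  have hbC : b ∈ C := hb.1
  have hane : a ≠ e := ha.2
  have hbne : b ≠ e := hb.2
  have hzC : ‖s • a + t • b‖⁻¹ • (s • a + t • b) ∈ C :=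
    hCarc a haC b hbC ⟨s, t, hs, ht, hv, rfl⟩
  refine ⟨hzC, ?_⟩
  intro hze
  rw [Set.mem_singleton_iff] at hze
  have han : ‖a‖ = 1 := hCn a haC
  have hbn : ‖b‖ = 1 := hCn b hbC
  rcases hs.eq_or_lt with hs0 | hs0
  · -- s = 0 : z = b
    have htpos : 0 < t := by
      rcases ht.eq_or_lt with ht0 | ht0
      · exfalso; apply hv; rw [← hs0, ← ht0]; simp
      · exact ht0
    have hzb : ‖s • a + t • b‖⁻¹ • (s • a + t • b) = b := by
      rw [← hs0, zero_smul, zero_add, norm_smul, Real.norm_eq_abs, abs_of_pos htpos,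
        hbn, mul_one, ← smul_assoc, smul_eq_mul, inv_mul_cancel₀ (ne_of_gt htpos), one_smul]
    exact hbne (hzb.symm.trans hze)
  rcases ht.eq_or_lt with ht0 | ht0
  · -- t = 0 : z = a
    have hza : ‖s • a + t • b‖⁻¹ • (s • a + t • b) = a := by
      rw [← ht0, zero_smul, add_zero, norm_smul, Real.norm_eq_abs, abs_of_pos hs0,
        han, mul_one, ← smul_assoc, smul_eq_mul, inv_mul_cancel₀ (ne_of_gt hs0), one_smul]
    exact hane (hza.symm.trans hze)
  -- now s, t > 0
  set v := s • a + t • b with hvdef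
  have hr : 0 < ‖v‖ := norm_pos_iff.2 hv
  have hge : ⟪g, e⟫ = 0 := hinner_g e heF
  have hhe : ⟪h, e⟫ = 0 := hinner_h e heF
  have hgv : ⟪g, v⟫ = 0 := by
    have h1 : ⟪g, ‖v‖⁻¹ • v⟫ = 0 := by rw [hze]; exact hge
    rw [real_inner_smul_right] at h1
    rcases mul_eq_zero.1 h1 with h2 | h2
    · exact absurd h2 (inv_ne_zero (ne_of_gt hr))
    · exact h2
  have hhv : ⟪h, v⟫ = 0 := by
    have h1 : ⟪h, ‖v‖⁻¹ • v⟫ = 0 := by rw [hze]; exact hhe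
    rw [real_inner_smul_right] at h1
    rcases mul_eq_zero.1 h1 with h2 | h2
    · exact absurd h2 (inv_ne_zero (ne_of_gt hr))
    · exact h2
  have hgv' : s * ⟪g, a⟫ + t * ⟪g, b⟫ = 0 := by
    rw [← real_inner_smul_right, ← real_inner_smul_right, ← inner_add_right]; exact hgv
  have hhv' : s * ⟪h, a⟫ + t * ⟪h, b⟫ = 0 := by
    rw [← real_inner_smul_right, ← real_inner_smul_right, ← inner_add_right]; exact hhv
  have keyXY : ∀ X Y : ℝ, 0 ≤ X → 0 ≤ Y → s * X + t * Y = 0 → X = 0 ∧ Y = 0 := by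
    intro X Y hX hY hXY
    have p1 : 0 ≤ s * X := mul_nonneg hs0.le hX
    have p2 : 0 ≤ t * Y := mul_nonneg ht0.le hY
    have p3 : s * X = 0 := by linarith
    have p4 : t * Y = 0 := by linarith
    exact ⟨(mul_eq_zero.1 p3).resolve_left (ne_of_gt hs0),
      (mul_eq_zero.1 p4).resolve_left (ne_of_gt ht0)⟩
  have hga : ⟪g, a⟫ = 0 := (keyXY _ _ (hCg a haC) (hCg b hbC) hgv').1
  have hgb : ⟪g, b⟫ = 0 := (keyXY _ _ (hCg a haC) (hCg b hbC) hgv').2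
  have hha : ⟪h, a⟫ = 0 := (keyXY _ _ (hCh a haC) (hCh b hbC) hhv').1
  have hhb : ⟪h, b⟫ = 0 := (keyXY _ _ (hCh a haC) (hCh b hbC) hhv').2
  have haF : a ∈ F := memF a haC hga hha
  have hbF : b ∈ F := memF b hbC hgb hhb
  by_cases hab : a = b
  · -- then z = a
    have hza : ‖v‖⁻¹ • v = a := by
      rw [hvdef, hab, ← add_smul, norm_smul, Real.norm_eq_abs, abs_of_pos (by linarith),
        hbn, mul_one, ← smul_assoc, smul_eq_mul, inv_mul_cancel₀ (by positivity), one_smul]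
    exact hbne ((hab ▸ hza).symm.trans hze)
  -- a ≠ b : strict triangle inequality
  have hablt : ⟪a, b⟫ < 1 := by
    have hsub : a - b ≠ 0 := sub_ne_zero.2 hab
    have h1 : 0 < ‖a - b‖ ^ 2 := pow_pos (norm_pos_iff.2 hsub) 2
    have h2 : ‖a - b‖ ^ 2 = 2 - 2 * ⟪a, b⟫ := by
      rw [← real_inner_self_eq_norm_sq, inner_sub_sub_self, real_inner_self_eq_norm_sq,
        real_inner_self_eq_norm_sq, han, hbn, real_inner_comm b a]
      ring
    linarith
  have haa : ⟪a, a⟫ = 1 := by rw [real_inner_self_eq_norm_sq, han]; norm_num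
  have hbb : ⟪b, b⟫ = 1 := by rw [real_inner_self_eq_norm_sq, hbn]; norm_num
  have hr2 : ‖v‖ ^ 2 = s ^ 2 + 2 * s * t * ⟪a, b⟫ + t ^ 2 := by
    rw [← real_inner_self_eq_norm_sq, hvdef, real_inner_add_add_self,
      real_inner_smul_left, real_inner_smul_right, real_inner_smul_left,
      real_inner_smul_right, real_inner_smul_left, real_inner_smul_right, haa, hbb]
    ring
  have hst : 0 < s * t * (1 - ⟪a, b⟫) := mul_pos (mul_pos hs0 ht0) (by linarith)
  have h4 : ‖v‖ ^ 2 < (s + t) ^ 2 := by rw [hr2]; ring_nf; nlinarith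
  have hrlt : ‖v‖ < s + t := lt_of_pow_lt_pow_left₀ 2 (by positivity) h4
  have hfa : ⟪u, e⟫ ≤ ⟪u, a⟫ := hemin haF
  have hfb : ⟪u, e⟫ ≤ ⟪u, b⟫ := hemin hbF
  have hfev : ⟪u, e⟫ = ‖v‖⁻¹ * (s * ⟪u, a⟫ + t * ⟪u, b⟫) := by
    rw [← hze, real_inner_smul_right, hvdef, inner_add_right, real_inner_smul_right,
      real_inner_smul_right]
  have hre : ‖v‖ * ⟪u, e⟫ = s * ⟪u, a⟫ + t * ⟪u, b⟫ := by
    rw [hfev, ← mul_assoc, mul_inv_cancel₀ (ne_of_gt hr), one_mul]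
  have k1 : s * ⟪u, e⟫ ≤ s * ⟪u, a⟫ := mul_le_mul_of_nonneg_left hfa hs0.le
  have k2 : t * ⟪u, e⟫ ≤ t * ⟪u, b⟫ := mul_le_mul_of_nonneg_left hfb ht0.le
  have k3 : ‖v‖ * ⟪u, e⟫ < (s + t) * ⟪u, e⟫ := mul_lt_mul_of_pos_right hrlt hfe
  linarith
end
end

section
/- Let C ⊂ S^d be a spherically convex body with diam(C) = π/2. Then there exist two points of C at spherical distance π/2 such that at least one of them is an extreme point of C. -/
open scoped RealInnerProductSpace

noncomputable section

open SphericalGeom Real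

set_option maxHeartbeats 1000000 in

/-- A spherically convex body `C ⊂ S^d` with `diam(C) = π/2` has two
points at spherical distance `π/2` at least one of which is extreme. -/
theorem exists_extreme_at_diameter_pi_div_two (d : ℕ) (hd : 2 ≤ d)
    (C : Set (Esp (d + 1))) (hC : IsSphConvexBody C)
    (hdiam : sdiam C = Real.pi / 2) :
    ∃ p ∈ C, ∃ q ∈ C, sdist p q = Real.pi / 2 ∧
      (IsExtremePt C p ∨ IsExtremePt C q) := by
  obtain ⟨hCcl, ⟨hCsub, hanti, harc⟩, xh, hxhC, ε, hε, hball⟩ := hC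
  have hnorm : ∀ x ∈ C, ‖x‖ = 1 := fun x hx => by
    have := hCsub hx; simpa [unitSphere, mem_sphere_zero_iff_norm] using this
  have hCcomp : IsCompact C :=
    (isCompact_sphere (0 : Esp (d + 1)) 1).of_isClosed_subset hCcl hCsub
  set S : Set ℝ := {t | ∃ p ∈ C, ∃ q ∈ C, t = sdist p q} with hSdef
  have hsup : sSup S = Real.pi / 2 := hdiam
  have hcont : Continuous fun pq : Esp (d + 1) × Esp (d + 1) => sdist pq.1 pq.2 :=
    Real.continuous_arccos.comp (continuous_fst.inner continuous_snd)
  have hSim : S = (fun pq : Esp (d + 1) × Esp (d + 1) => sdist pq.1 pq.2) '' (C ×ˢ C) := by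
    ext t
    constructor
    · rintro ⟨p, hp, q, hq, rfl⟩; exact ⟨(p, q), ⟨hp, hq⟩, rfl⟩
    · rintro ⟨⟨p, q⟩, ⟨hp, hq⟩, rfl⟩; exact ⟨p, hp, q, hq, rfl⟩
  have hScomp : IsCompact S := by
    rw [hSim]; exact (hCcomp.prod hCcomp).image hcont
  have hSne : S.Nonempty := ⟨_, xh, hxhC, xh, hxhC, rfl⟩
  have hmem : Real.pi / 2 ∈ S := hsup ▸ hScomp.sSup_mem hSne
  obtain ⟨p0, hp0, q0, hq0, hpq⟩ := hmem
  have hnn : ∀ x ∈ C, ∀ y ∈ C, (0 : ℝ) ≤ ⟪x, y⟫ := by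
    intro x hx y hy
    have h1 : sdist x y ≤ Real.pi / 2 := by
      have hmem' : sdist x y ∈ S := ⟨x, hx, y, hy, rfl⟩
      have := le_csSup hScomp.bddAbove hmem'
      rwa [hsup] at this
    exact Real.arccos_le_pi_div_two.1 h1
  have hq0p0 : ⟪q0, p0⟫ = 0 := by
    rw [real_inner_comm]
    exact Real.arccos_eq_pi_div_two.1 hpq.symm
  set M : Set (Esp (d + 1)) := {x | x ∈ C ∧ ⟪q0, x⟫ = 0} with hMdef
  have hp0M : p0 ∈ M := ⟨hp0, hq0p0⟩
  have hMsub : M ⊆ C := fun x hx => hx.1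
  have hMcl : IsClosed M := by
    have : M = C ∩ {x | ⟪q0, x⟫ = 0} := rfl
    rw [this]
    exact hCcl.inter (isClosed_eq (continuous_const.inner continuous_id) continuous_const)
  have hMcomp : IsCompact M := hCcomp.of_isClosed_subset hMcl hMsub
  -- the interior point xh has positive inner product with every point of M
  have hpos : ∀ m ∈ M, (0 : ℝ) < ⟪xh, m⟫ := by
    intro m hm
    rcases (hnn xh hxhC m hm.1).lt_or_eq with h | h
    · exact h
    exfalso
    have hm1 : ‖m‖ = 1 := hnorm m hm.1
    have hxh1 : ‖xh‖ = 1 := hnorm xh hxhC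
    set δ : ℝ := min (ε / 3) 1 with hδdef
    have hδpos : 0 < δ := lt_min (by linarith) one_pos
    have hδε : δ ≤ ε / 3 := min_le_left _ _
    set w : Esp (d + 1) := xh - δ • m with hwdef
    have hwsq : ‖w‖ ^ 2 = 1 + δ ^ 2 := by
      rw [hwdef, norm_sub_sq_real, real_inner_smul_right, ← h, norm_smul, hxh1, hm1,
        Real.norm_eq_abs, abs_of_pos hδpos]
      ring
    have hw1 : 1 ≤ ‖w‖ := by nlinarith [norm_nonneg w, sq_nonneg δ]
    have hwpos : 0 < ‖w‖ := lt_of_lt_of_le one_pos hw1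
    have hwle : ‖w‖ ≤ 1 + δ := by nlinarith [norm_nonneg w]
    set x' : Esp (d + 1) := ‖w‖⁻¹ • w with hx'def
    have hx'norm : ‖x'‖ = 1 := by
      rw [hx'def, norm_smul, Real.norm_eq_abs, abs_of_pos (inv_pos.2 hwpos),
        inv_mul_cancel₀ hwpos.ne']
    have hx'sph : x' ∈ unitSphere (d + 1) := by
      simp [unitSphere, mem_sphere_zero_iff_norm, hx'norm]
    have hdist1 : ‖x' - w‖ = ‖w‖ - 1 := by
      have : x' - w = (‖w‖⁻¹ - 1) • w := by
        rw [hx'def, sub_smul, one_smul]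
      rw [this, norm_smul, Real.norm_eq_abs, abs_of_nonpos (by
        have : ‖w‖⁻¹ ≤ 1 := by
          rw [inv_le_one_iff₀]; right; exact hw1
        linarith)]
      field_simp
      ring
    have hdist2 : ‖w - xh‖ = δ := by
      rw [hwdef]
      simp [norm_smul, Real.norm_eq_abs, abs_of_pos hδpos, hm1]
    have hdist : dist x' xh < ε := by
      have h1 : dist x' xh ≤ ‖x' - w‖ + ‖w - xh‖ := by
        rw [dist_eq_norm]
        calc ‖x' - xh‖ = ‖(x' - w) + (w - xh)‖ := by rw [sub_add_sub_cancel]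
          _ ≤ ‖x' - w‖ + ‖w - xh‖ := norm_add_le _ _
      rw [hdist1, hdist2] at h1
      have : ‖w‖ - 1 ≤ δ := by linarith
      linarith
    have hx'C : x' ∈ C := hball ⟨Metric.mem_ball.2 hdist, hx'sph⟩
    have hneg : ⟪x', m⟫ < 0 := by
      have hmm : ⟪m, m⟫ = (1 : ℝ) := by
        rw [real_inner_self_eq_norm_mul_norm, hm1]; ring
      have : ⟪x', m⟫ = ‖w‖⁻¹ * (⟪xh, m⟫ - δ * ⟪m, m⟫) := by
        rw [hx'def, real_inner_smul_left, hwdef, inner_sub_left, real_inner_smul_left]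
      rw [this, ← h, hmm]
      have : (0 : ℝ) < ‖w‖⁻¹ := inv_pos.2 hwpos
      nlinarith
    exact absurd (hnn x' hx'C m hm.1) (not_le.2 hneg)
  have hfcont : Continuous fun x : Esp (d + 1) => ⟪xh, x⟫ :=
    continuous_const.inner continuous_id
  obtain ⟨e, heM, hemin⟩ := hMcomp.exists_isMinOn ⟨p0, hp0M⟩ hfcont.continuousOn
  have heq0 : ⟪q0, e⟫ = 0 := heM.2
  have hγ : 0 < ⟪xh, e⟫ := hpos e heM
  refine ⟨e, heM.1, q0, hq0, ?_, Or.inl ?_⟩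
  · show Real.arccos ⟪e, q0⟫ = _
    rw [real_inner_comm, heq0, Real.arccos_zero]
  refine ⟨heM.1, fun x hx => hCsub hx.1, fun x hx hmemx => hanti x hx.1 hmemx.1, ?_⟩
  intro a ha b hb z hz
  have hzC : z ∈ C := harc a ha.1 b hb.1 hz
  refine ⟨hzC, fun hze => ?_⟩
  have hze' : z = e := hze
  obtain ⟨s, t, hs, ht, hwne, hzdef⟩ := hz
  have ha1 : ‖a‖ = 1 := hnorm a ha.1
  have hb1 : ‖b‖ = 1 := hnorm b hb.1
  rcases hs.eq_or_lt with hs0 | hs0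
  · -- s = 0 : z = b
    have htne : t ≠ 0 := by
      rintro rfl
      exact hwne (by rw [← hs0]; simp)
    have htpos : 0 < t := ht.lt_of_ne (Ne.symm htne)
    have hzb : z = b := by
      rw [hzdef, ← hs0, zero_smul, zero_add, norm_smul, Real.norm_eq_abs,
        abs_of_pos htpos, hb1, mul_one, smul_smul, inv_mul_cancel₀ htpos.ne', one_smul]
    have : b = e := hzb.symm.trans hze'
    exact hb.2 (by simp [this])
  rcases ht.eq_or_lt with ht0 | ht0
  · -- t = 0 : z = a
    have hsne : s ≠ 0 := hs0.ne'
    have hza : z = a := by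
      rw [hzdef, ← ht0, zero_smul, add_zero, norm_smul, Real.norm_eq_abs,
        abs_of_pos hs0, ha1, mul_one, smul_smul, inv_mul_cancel₀ hsne, one_smul]
    have : a = e := hza.symm.trans hze'
    exact ha.2 (by simp [this])
  -- main case: s > 0, t > 0
  set w : Esp (d + 1) := s • a + t • b with hwdef
  have hwpos : 0 < ‖w‖ := norm_pos_iff.2 hwne
  have hinq : ⟪q0, z⟫ = ‖w‖⁻¹ * (s * ⟪q0, a⟫ + t * ⟪q0, b⟫) := by
    rw [hzdef, real_inner_smul_right, inner_add_right, real_inner_smul_right,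
      real_inner_smul_right]
  have hz0 : ⟪q0, z⟫ = 0 := by rw [hze']; exact heq0
  have hqa : 0 ≤ ⟪q0, a⟫ := hnn q0 hq0 a ha.1
  have hqb : 0 ≤ ⟪q0, b⟫ := hnn q0 hq0 b hb.1
  have hsum : s * ⟪q0, a⟫ + t * ⟪q0, b⟫ = 0 := by
    have h2 : (0 : ℝ) = ‖w‖⁻¹ * (s * ⟪q0, a⟫ + t * ⟪q0, b⟫) := hz0 ▸ hinq
    have h3 : (‖w‖⁻¹ : ℝ) ≠ 0 := inv_ne_zero hwpos.ne'
    rcases mul_eq_zero.1 h2.symm with h | h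
    · exact absurd h h3
    · exact h
  have hqa0 : ⟪q0, a⟫ = 0 := le_antisymm (by nlinarith) hqa
  have hqb0 : ⟪q0, b⟫ = 0 := le_antisymm (by nlinarith) hqb
  have haM : a ∈ M := ⟨ha.1, hqa0⟩
  have hbM : b ∈ M := ⟨hb.1, hqb0⟩
  have hfa : ⟪xh, e⟫ ≤ ⟪xh, a⟫ := hemin haM
  have hfb : ⟪xh, e⟫ ≤ ⟪xh, b⟫ := hemin hbM
  have hfe : ⟪xh, e⟫ * ‖w‖ = s * ⟪xh, a⟫ + t * ⟪xh, b⟫ := by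
    have : ⟪xh, e⟫ = ‖w‖⁻¹ * (s * ⟪xh, a⟫ + t * ⟪xh, b⟫) := by
      rw [← hze', hzdef, real_inner_smul_right, inner_add_right, real_inner_smul_right,
        real_inner_smul_right]
    rw [this]
    field_simp
  have hwle : ‖w‖ ≤ s + t := by
    calc ‖w‖ ≤ ‖s • a‖ + ‖t • b‖ := norm_add_le _ _
      _ = s + t := by
        rw [norm_smul, norm_smul, ha1, hb1, Real.norm_eq_abs, Real.norm_eq_abs,
          abs_of_pos hs0, abs_of_pos ht0]; ring
  have hwge : s + t ≤ ‖w‖ := by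
    have h1 : (s + t) * ⟪xh, e⟫ ≤ s * ⟪xh, a⟫ + t * ⟪xh, b⟫ := by
      nlinarith [mul_le_mul_of_nonneg_left hfa hs0.le, mul_le_mul_of_nonneg_left hfb ht0.le]
    nlinarith
  have hweq : ‖w‖ = s + t := le_antisymm hwle hwge
  have hray : SameRay ℝ (s • a) (t • b) := by
    apply sameRay_iff_norm_add.2
    rw [norm_smul, norm_smul, ha1, hb1, Real.norm_eq_abs, Real.norm_eq_abs,
      abs_of_pos hs0, abs_of_pos ht0, mul_one, mul_one]
    exact hweq
  have hane : a ≠ 0 := fun h => by rw [h, norm_zero] at ha1; exact one_ne_zero ha1.symm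
  have hbne : b ≠ 0 := fun h => by rw [h, norm_zero] at hb1; exact one_ne_zero hb1.symm
  have hsa : s • a ≠ 0 := smul_ne_zero hs0.ne' hane
  have htb : t • b ≠ 0 := smul_ne_zero ht0.ne' hbne
  have hab : a = b := by
    have h := (sameRay_iff_inv_norm_smul_eq_of_ne hsa htb).1 hray
    rwa [norm_smul, norm_smul, ha1, hb1, Real.norm_eq_abs, Real.norm_eq_abs,
      abs_of_pos hs0, abs_of_pos ht0, mul_one, mul_one, smul_smul, smul_smul,
      inv_mul_cancel₀ hs0.ne', inv_mul_cancel₀ ht0.ne', one_smul, one_smul] at h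
  have hza : z = a := by
    have hw' : w = (s + t) • a := by rw [hwdef, hab, ← add_smul]
    rw [hzdef, hw', norm_smul, Real.norm_eq_abs, abs_of_pos (by linarith : (0:ℝ) < s + t),
      ha1, mul_one, smul_smul, inv_mul_cancel₀ (by linarith : s + t ≠ 0), one_smul]
  have : a = e := hza.symm.trans hze'
  exact ha.2 (by simp [this])
end
end

section
/- Every spherically convex body C ⊂ S^2 of diameter π/2 contains a pair of extreme points at spherical distance π/2 from each other. -/
open scoped RealInnerProductSpace

noncomputable section

open SphericalGeom Real

open SphericalGeom Real in
/-- Key lemma: if all pairwise inner products in `C` are nonnegative and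
`p, q ∈ C` with `⟪q, p⟫ = 0`, then there is an extreme point `e` of `C`
with `⟪q, e⟫ = 0`. -/
theorem SphericalGeom.exists_extreme_orth (C : Set (Esp 3)) (hcl : IsClosed C)
    (hconv : IsSphConvex C)
    (hpos : ∀ x ∈ C, ∀ y ∈ C, 0 ≤ ⟪x, y⟫)
    (p q : Esp 3) (hp : p ∈ C) (hq : q ∈ C) (hpq : ⟪q, p⟫ = 0) :
    ∃ e ∈ C, IsExtremePt C e ∧ ⟪q, e⟫ = 0 := by
  obtain ⟨hsub, hanti, harc⟩ := hconv
  have hnorm : ∀ x ∈ C, ‖x‖ = 1 := by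
    intro x hx
    have := hsub hx
    simpa [unitSphere, mem_sphere_zero_iff_norm] using this
  -- the face F = C ∩ q^⊥
  set F : Set (Esp 3) := {x ∈ C | ⟪q, x⟫ = 0} with hF
  have hpF : p ∈ F := ⟨hp, hpq⟩
  have hFcl : IsClosed F :=
    hcl.inter (isClosed_eq (Continuous.inner continuous_const continuous_id) continuous_const)
  have hCcomp : IsCompact C := by
    refine (isCompact_sphere (0 : Esp 3) 1).of_isClosed_subset hcl ?_
    exact hsub
  have hFcomp : IsCompact F := hCcomp.of_isClosed_subset hFcl (fun x hx => hx.1)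
  obtain ⟨e, heF, hemin⟩ := hFcomp.exists_isMinOn ⟨p, hpF⟩
    ((Continuous.inner continuous_const continuous_id) : Continuous fun x : Esp 3 => ⟪p, x⟫).continuousOn
  have heC : e ∈ C := heF.1
  have heq : ⟪q, e⟫ = 0 := heF.2
  refine ⟨e, heC, ⟨heC, ?_, ?_, ?_⟩, heq⟩
  · exact fun x hx => hsub hx.1
  · intro x hx hnx
    exact hanti x hx.1 hnx.1
  · -- arcs stay inside C \ {e}
    intro a ha b hb z hz
    have hzC : z ∈ C := harc a ha.1 b hb.1 hz
    refine ⟨hzC, ?_⟩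
    intro hze
    rw [Set.mem_singleton_iff] at hze
    subst hze
    -- e lies on the arc from a to b; derive a contradiction
    obtain ⟨s, t, hs, ht, hne, hrep⟩ := hz
    have hna : ‖a‖ = 1 := hnorm a ha.1
    have hnb : ‖b‖ = 1 := hnorm b hb.1
    have hae : a ≠ z := fun h => ha.2 (by simp [h])
    have hbe : b ≠ z := fun h => hb.2 (by simp [h])
    set w : Esp 3 := s • a + t • b with hw
    have hN : (0:ℝ) < ‖w‖ := norm_pos_iff.2 hne
    -- s and t are both positive
    have hspos : 0 < s := by
      rcases lt_or_eq_of_le hs with h | h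
      · exact h
      · exfalso
        apply hbe
        have ht0 : 0 < t := by
          rcases lt_or_eq_of_le ht with h' | h'
          · exact h'
          · exfalso; apply hne; rw [hw, ← h, ← h']; simp
        have : w = t • b := by rw [hw, ← h]; simp
        rw [hrep, this, norm_smul, hnb]
        simp [abs_of_pos ht0, smul_smul, ht0.ne']
    have htpos : 0 < t := by
      rcases lt_or_eq_of_le ht with h | h
      · exact h
      · exfalso
        apply hae
        have : w = s • a := by rw [hw, ← h]; simp
        rw [hrep, this, norm_smul, hna]
        simp [abs_of_pos hspos, smul_smul, hspos.ne']
    -- inner products with q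
    have hqa : (0:ℝ) ≤ ⟪q, a⟫ := hpos q hq a ha.1
    have hqb : (0:ℝ) ≤ ⟪q, b⟫ := hpos q hq b hb.1
    have hqe' : ⟪q, z⟫ = ‖w‖⁻¹ * (s * ⟪q, a⟫ + t * ⟪q, b⟫) := by
      rw [hrep, hw]
      simp [inner_add_right, inner_smul_right]
      ring
    have hsum0 : s * ⟪q, a⟫ + t * ⟪q, b⟫ = 0 := by
      have := heq
      rw [hqe'] at this
      have hNne : (‖w‖:ℝ)⁻¹ ≠ 0 := inv_ne_zero hN.ne'
      exact (mul_eq_zero.1 this).resolve_left hNne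
    have hqa0 : ⟪q, a⟫ = 0 := by
      have h1 : (0:ℝ) ≤ s * ⟪q, a⟫ := mul_nonneg hspos.le hqa
      have h2 : (0:ℝ) ≤ t * ⟪q, b⟫ := mul_nonneg htpos.le hqb
      have h3 : s * ⟪q, a⟫ = 0 := by linarith
      rcases mul_eq_zero.1 h3 with h | h
      · exact absurd h hspos.ne'
      · exact h
    have hqb0 : ⟪q, b⟫ = 0 := by
      have h1 : (0:ℝ) ≤ s * ⟪q, a⟫ := mul_nonneg hspos.le hqa
      have h2 : (0:ℝ) ≤ t * ⟪q, b⟫ := mul_nonneg htpos.le hqb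
      have h3 : t * ⟪q, b⟫ = 0 := by linarith
      rcases mul_eq_zero.1 h3 with h | h
      · exact absurd h htpos.ne'
      · exact h
    have haF : a ∈ F := ⟨ha.1, hqa0⟩
    have hbF : b ∈ F := ⟨hb.1, hqb0⟩
    -- set up the minimization equality
    set m : ℝ := ⟪p, z⟫ with hm
    have hma : m ≤ ⟪p, a⟫ := hemin haF
    have hmb : m ≤ ⟪p, b⟫ := hemin hbF
    have hm0 : 0 ≤ m := hpos p hp z hzC
    have hNle : ‖w‖ ≤ s + t := by
      calc ‖w‖ ≤ ‖s • a‖ + ‖t • b‖ := norm_add_le _ _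
        _ = s + t := by rw [norm_smul, norm_smul, hna, hnb,
            Real.norm_of_nonneg hs, Real.norm_of_nonneg ht]; ring
    have hpe' : m * ‖w‖ = s * ⟪p, a⟫ + t * ⟪p, b⟫ := by
      have : m = ‖w‖⁻¹ * (s * ⟪p, a⟫ + t * ⟪p, b⟫) := by
        rw [hm, hrep, hw]
        simp [inner_add_right, inner_smul_right]
        ring
      rw [this]
      field_simp
    -- equality analysis
    have hsumeq : s * (⟪p, a⟫ - m) + t * (⟪p, b⟫ - m) = m * (‖w‖ - (s + t)) := by
      linear_combination (-1 : ℝ) * hpe'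
    have hApos : (0:ℝ) ≤ s * (⟪p, a⟫ - m) := mul_nonneg hspos.le (by linarith)
    have hBpos : (0:ℝ) ≤ t * (⟪p, b⟫ - m) := mul_nonneg htpos.le (by linarith)
    have hCneg : m * (‖w‖ - (s + t)) ≤ 0 :=
      mul_nonpos_of_nonneg_of_nonpos hm0 (by linarith)
    have hpa : ⟪p, a⟫ = m := by
      have hz0 : s * (⟪p, a⟫ - m) = 0 := le_antisymm (by linarith) hApos
      rcases mul_eq_zero.1 hz0 with h | h
      · exact absurd h hspos.ne'
      · linarith
    have hpb : ⟪p, b⟫ = m := by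
      have hz0 : t * (⟪p, b⟫ - m) = 0 := le_antisymm (by linarith) hBpos
      rcases mul_eq_zero.1 hz0 with h | h
      · exact absurd h htpos.ne'
      · linarith
    rcases lt_or_eq_of_le hm0 with hmpos | hmz
    · -- m > 0 forces ‖w‖ = s + t, so a = b, so e = a
      have hmN : m * (‖w‖ - (s + t)) = 0 := by
        linear_combination hpe' + s * hpa + t * hpb
      have hNeq : ‖w‖ = s + t := by
        rcases mul_eq_zero.1 hmN with h | h
        · exact absurd h hmpos.ne'
        · linarith
      have hab1 : ⟪a, b⟫ = 1 := by
        have h2 : ‖w‖ ^ 2 = s^2 + t^2 + 2 * s * t * ⟪a, b⟫ := by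
          rw [hw, norm_add_sq_real, norm_smul, norm_smul, hna, hnb,
            Real.norm_of_nonneg hs, Real.norm_of_nonneg ht,
            real_inner_smul_left, real_inner_smul_right]
          ring
        rw [hNeq] at h2
        have h3 : 2 * s * t * (⟪a, b⟫ - 1) = 0 := by linear_combination -h2
        have hst : (0:ℝ) < 2 * s * t := by positivity
        rcases mul_eq_zero.1 h3 with h | h
        · exact absurd h hst.ne'
        · linarith
      have hab : a = b := by
        have : ‖a - b‖ ^ 2 = 0 := by
          rw [norm_sub_sq_real, hna, hnb, hab1]; ring
        have := pow_eq_zero_iff (n := 2) (by norm_num) |>.1 this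
        exact sub_eq_zero.1 (by simpa [norm_eq_zero] using this)
      have hzb : z = b := by
        rw [hrep, hw, hab, ← add_smul, norm_smul, hnb,
          Real.norm_of_nonneg (by positivity : (0:ℝ) ≤ s + t), mul_one,
          smul_smul, inv_mul_cancel₀ (by positivity : (s + t) ≠ (0:ℝ)), one_smul]
      exact hae (hab.trans hzb.symm)
    · -- m = 0 : a, b are orthogonal to both p and q; dimension-3 argument
      have hpa0 : ⟪p, a⟫ = 0 := by rw [hpa, ← hmz]
      have hpb0 : ⟪p, b⟫ = 0 := by rw [hpb, ← hmz]
      -- consider u = b - ⟪a,b⟫ • a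
      set u : Esp 3 := b - ⟪a, b⟫ • a with hu
      have hua : ⟪a, u⟫ = 0 := by
        rw [hu, inner_sub_right, real_inner_smul_right, real_inner_self_eq_norm_sq,
          hna]
        ring
      have hup : ⟪p, u⟫ = 0 := by
        rw [hu, inner_sub_right, real_inner_smul_right, hpb0, hpa0]
        ring
      have huq : ⟪q, u⟫ = 0 := by
        rw [hu, inner_sub_right, real_inner_smul_right, hqb0, hqa0]
        ring
      have hu0 : u = 0 := by
        by_contra hu0
        have hnu : (0:ℝ) < ‖u‖ := norm_pos_iff.2 hu0
        set u' : Esp 3 := ‖u‖⁻¹ • u with hu'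
        have hnp : ‖p‖ = 1 := hnorm p hp
        have hnq : ‖q‖ = 1 := hnorm q hq
        have hpp : ⟪p, p⟫ = (1:ℝ) := by
          rw [real_inner_self_eq_norm_sq, hnp]; norm_num
        have hqq : ⟪q, q⟫ = (1:ℝ) := by
          rw [real_inner_self_eq_norm_sq, hnq]; norm_num
        have haa : ⟪a, a⟫ = (1:ℝ) := by
          rw [real_inner_self_eq_norm_sq, hna]; norm_num
        have huu : ⟪u', u'⟫ = (1:ℝ) := by
          rw [hu', real_inner_smul_left, real_inner_smul_right,
            real_inner_self_eq_norm_sq]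
          field_simp
        have hpq' : ⟪p, q⟫ = (0:ℝ) := by rw [real_inner_comm]; exact hpq
        have hap : ⟪a, p⟫ = (0:ℝ) := by rw [real_inner_comm]; exact hpa0
        have haq : ⟪a, q⟫ = (0:ℝ) := by rw [real_inner_comm]; exact hqa0
        have hpu' : ⟪p, u'⟫ = (0:ℝ) := by
          rw [hu', real_inner_smul_right, hup]; ring
        have hqu' : ⟪q, u'⟫ = (0:ℝ) := by
          rw [hu', real_inner_smul_right, huq]; ring
        have hau' : ⟪a, u'⟫ = (0:ℝ) := by
          rw [hu', real_inner_smul_right, hua]; ring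
        have hu'p : ⟪u', p⟫ = (0:ℝ) := by rw [real_inner_comm]; exact hpu'
        have hu'q : ⟪u', q⟫ = (0:ℝ) := by rw [real_inner_comm]; exact hqu'
        have hu'a : ⟪u', a⟫ = (0:ℝ) := by rw [real_inner_comm]; exact hau'
        have hnu' : ‖u'‖ = 1 := by
          rw [hu', norm_smul, norm_inv, norm_norm, inv_mul_cancel₀ hnu.ne']
        set v : Fin 4 → Esp 3 := ![p, q, a, u'] with hv
        have hortho : Orthonormal ℝ v := by
          rw [orthonormal_iff_ite]
          intro i j
          fin_cases i <;> fin_cases j <;>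
            simp only [hv, Matrix.cons_val_zero, Matrix.cons_val_one,
              Matrix.head_cons, Matrix.cons_val_two, Matrix.tail_cons,
              Matrix.cons_val_three] <;>
            norm_num [hpp, hqq, haa, huu, hpq, hpq', hpa0, hqa0, hap, haq,
              hpu', hqu', hau', hu'p, hu'q, hu'a, Fin.ext_iff, hnp, hnq, hna, hnu']
        have hcard := hortho.linearIndependent.fintype_card_le_finrank
        rw [finrank_euclideanSpace_fin] at hcard
        simp at hcard
      have hba : b = ⟪a, b⟫ • a := by
        have h := hu0
        rw [hu] at h
        exact sub_eq_zero.1 h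
      have habs : |⟪a, b⟫| = 1 := by
        have h := congrArg norm hba
        rw [norm_smul, Real.norm_eq_abs, hna, hnb, mul_one] at h
        exact h.symm
      rcases abs_eq (by norm_num : (0:ℝ) ≤ 1) |>.1 habs with h1 | h1
      · -- a = b again
        have hab : a = b := by rw [hba, h1, one_smul]
        have hzb : z = b := by
          rw [hrep, hw, hab, ← add_smul, norm_smul, hnb,
            Real.norm_of_nonneg (by positivity : (0:ℝ) ≤ s + t), mul_one,
            smul_smul, inv_mul_cancel₀ (by positivity : (s + t) ≠ (0:ℝ)), one_smul]
        exact hae (hab.trans hzb.symm)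
      · -- b = -a : antipodal pair in C, contradiction
        have : b = -a := by rw [hba, h1]; simp
        exact hanti a ha.1 (this ▸ hb.1)


/-- Every spherically convex body `C ⊂ S^2` of diameter `π/2` contains
a pair of extreme points at spherical distance `π/2`. -/
theorem exists_extreme_pair_S2 (C : Set (Esp 3)) (hC : IsSphConvexBody C)
    (hdiam : sdiam C = Real.pi / 2) :
    ∃ p q : Esp 3, IsExtremePt C p ∧ IsExtremePt C q ∧
      sdist p q = Real.pi / 2 := by
  obtain ⟨hcl, hconv, x0, hx0, ε, hε, hball⟩ := hC
  have hCne : C.Nonempty := ⟨x0, hx0⟩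
  have hsub := hconv.1
  have hnorm1 : ∀ x ∈ C, ‖x‖ = 1 := by
    intro x hx
    simpa [unitSphere, mem_sphere_zero_iff_norm] using hsub hx
  have hCcomp : IsCompact C :=
    (isCompact_sphere (0 : Esp 3) 1).of_isClosed_subset hcl hsub
  -- the set of realized distances
  set S : Set ℝ := {t | ∃ p ∈ C, ∃ q ∈ C, t = sdist p q} with hS
  have hSimg : S = (fun z : Esp 3 × Esp 3 => sdist z.1 z.2) '' (C ×ˢ C) := by
    ext t
    constructor
    · rintro ⟨p, hp, q, hq, rfl⟩
      exact ⟨(p, q), ⟨hp, hq⟩, rfl⟩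
    · rintro ⟨⟨p, q⟩, ⟨hp, hq⟩, rfl⟩
      exact ⟨p, hp, q, hq, rfl⟩
  have hScomp : IsCompact S := by
    rw [hSimg]
    refine (hCcomp.prod hCcomp).image ?_
    unfold sdist
    exact Real.continuous_arccos.comp
      ((continuous_fst.inner continuous_snd))
  have hSne : S.Nonempty := ⟨sdist x0 x0, x0, hx0, x0, hx0, rfl⟩
  have hmax : sSup S ∈ S := hScomp.sSup_mem hSne
  rw [show sSup S = sdiam C from rfl, hdiam] at hmax
  obtain ⟨p, hp, q, hq, hpq⟩ := hmax
  -- all pairwise inner products are nonnegative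
  have hbdd : BddAbove S := hScomp.bddAbove
  have hpos : ∀ x ∈ C, ∀ y ∈ C, 0 ≤ ⟪x, y⟫ := by
    intro x hx y hy
    have hle : sdist x y ≤ Real.pi / 2 := by
      have : sdist x y ≤ sSup S := le_csSup hbdd ⟨x, hx, y, hy, rfl⟩
      rwa [show sSup S = sdiam C from rfl, hdiam] at this
    unfold sdist at hle
    rw [Real.arccos, sub_le_self_iff] at hle
    exact Real.arcsin_nonneg.1 hle
  -- inner product of the diameter pair is zero
  have hqp0 : ⟪q, p⟫ = 0 := by
    have : Real.arccos ⟪p, q⟫ = Real.pi / 2 := hpq.symm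
    rw [Real.arccos, sub_eq_self] at this
    rw [real_inner_comm]
    exact Real.arcsin_eq_zero_iff.1 this
  have hconv' : IsSphConvex C := hconv
  -- first extreme point
  obtain ⟨e, heC, hext, hqe⟩ :=
    SphericalGeom.exists_extreme_orth C hcl hconv' hpos p q hp hq hqp0
  -- second extreme point, orthogonal to e
  have heq0 : ⟪e, q⟫ = 0 := by rw [real_inner_comm]; exact hqe
  obtain ⟨f, hfC, hext', hef⟩ :=
    SphericalGeom.exists_extreme_orth C hcl hconv' hpos q e hq heC heq0
  refine ⟨e, f, hext, hext', ?_⟩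
  unfold sdist
  rw [hef, Real.arccos_zero]
end
end

section
/- If a reduced spherically convex body R ⊂ S^d fulfills Δ(R) ≥ π/2, then R is a body of constant width Δ(R), i.e. width_K(R) = Δ(R) for every hemisphere K supporting R. -/
open scoped RealInnerProductSpace

noncomputable section

open SphericalGeom Real

open scoped Pointwise

namespace SphAux

variable {n : ℕ}

lemma mem_us {x : Esp n} : x ∈ unitSphere n ↔ ‖x‖ = 1 := by
  simp [unitSphere, mem_sphere_zero_iff_norm]

lemma abs_inner_le_one {x y : Esp n} (hx : ‖x‖ = 1) (hy : ‖y‖ = 1) : |⟪x, y⟫| ≤ 1 := by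
  simpa [hx, hy] using abs_real_inner_le_norm x y

lemma inner_le_one {x y : Esp n} (hx : ‖x‖ = 1) (hy : ‖y‖ = 1) : ⟪x, y⟫ ≤ 1 :=
  (abs_le.mp (abs_inner_le_one hx hy)).2

lemma neg_one_le_inner {x y : Esp n} (hx : ‖x‖ = 1) (hy : ‖y‖ = 1) : (-1 : ℝ) ≤ ⟪x, y⟫ :=
  (abs_le.mp (abs_inner_le_one hx hy)).1

lemma inner_lt_one {x y : Esp n} (hx : ‖x‖ = 1) (hy : ‖y‖ = 1) (hne : x ≠ y) : ⟪x, y⟫ < 1 := by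
  have h0 : x - y ≠ 0 := sub_ne_zero.mpr hne
  have h1 : 0 < ‖x - y‖ ^ 2 := pow_pos (norm_pos_iff.mpr h0) 2
  have h2 : ‖x - y‖ ^ 2 = 2 - 2 * ⟪x, y⟫ := by
    rw [@norm_sub_sq_real, hx, hy]; ring
  linarith [h2 ▸ h1]

lemma neg_one_lt_inner {x y : Esp n} (hx : ‖x‖ = 1) (hy : ‖y‖ = 1) (hne : x ≠ -y) :
    (-1 : ℝ) < ⟪x, y⟫ := by
  have := inner_lt_one hx (by simpa using hy) hne
  rw [inner_neg_right] at this
  linarith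

lemma eq_neg_of_inner_eq_neg_one {x y : Esp n} (hx : ‖x‖ = 1) (hy : ‖y‖ = 1)
    (h : ⟪x, y⟫ = -1) : x = -y := by
  have h2 : ‖x + y‖ ^ 2 = 0 := by
    rw [@norm_add_sq_real, hx, hy, h]; ring
  have h3 : x + y = 0 := by
    have h4 := pow_eq_zero_iff (n := 2) (by norm_num) |>.mp h2
    exact norm_eq_zero.mp h4
  exact eq_neg_of_add_eq_zero_left h3

lemma mem_hemi {k x : Esp n} (hx : ‖x‖ = 1) : x ∈ hemi k ↔ 0 ≤ ⟪k, x⟫ := by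
  unfold hemi sdist
  rw [Set.mem_sep_iff, mem_us]
  simp [hx, Real.arccos_le_pi_div_two]

/-- characterization of `Supports` via inner products. -/
lemma supports_iff {k : Esp n} {C : Set (Esp n)} (hC : C ⊆ unitSphere n) :
    Supports k C ↔ ‖k‖ = 1 ∧ (∀ x ∈ C, 0 ≤ ⟪k, x⟫) ∧ ∃ p ∈ C, ⟪k, p⟫ = 0 := by
  unfold Supports
  constructor
  · rintro ⟨hk, hsub, p, hp, hps⟩
    have hku : ‖k‖ = 1 := mem_us.mp hk
    have hpu : ‖p‖ = 1 := mem_us.mp (hC hp)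
    refine ⟨hku, fun x hx => (mem_hemi (mem_us.mp (hC hx))).mp (hsub hx), p, hp, ?_⟩
    have h1 := Real.cos_arccos (neg_one_le_inner hku hpu) (inner_le_one hku hpu)
    rw [show sdist k p = Real.arccos ⟪k, p⟫ from rfl] at hps
    rw [hps, Real.cos_pi_div_two] at h1
    exact h1.symm
  · rintro ⟨hk, hpos, p, hp, hp0⟩
    refine ⟨mem_us.mpr hk, fun x hx => (mem_hemi (mem_us.mp (hC hx))).mpr (hpos x hx), p, hp, ?_⟩
    show Real.arccos ⟪k, p⟫ = π / 2
    rw [hp0, Real.arccos_zero]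

lemma supports_norm {k : Esp n} {C : Set (Esp n)} (h : Supports k C) : ‖k‖ = 1 :=
  mem_us.mp h.1

/-- The lune thickness formula: thickness of the lune `H(g) ∩ H(h)` is
`π - arccos ⟪g,h⟫`. -/
lemma luneThickness_eq {g h : Esp n} (hg : ‖g‖ = 1) (hh : ‖h‖ = 1) (h1 : g ≠ h)
    (h2 : g ≠ -h) : luneThickness g h = π - Real.arccos ⟪g, h⟫ := by
  obtain ⟨c, hc⟩ : ∃ c : ℝ, ⟪g, h⟫ = c := ⟨_, rfl⟩
  have hgh : ⟪h, g⟫ = c := by rw [← hc]; exact (real_inner_comm g h)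
  have hlt : c < 1 := hc ▸ inner_lt_one hg hh h1
  have hgt : (-1 : ℝ) < c := hc ▸ neg_one_lt_inner hg hh h2
  have hpos : (0 : ℝ) < 1 - c ^ 2 := by nlinarith
  have hu : ‖h - c • g‖ ^ 2 = 1 - c ^ 2 := by
    rw [@norm_sub_sq_real, hh, real_inner_smul_right, hgh, norm_smul, hg, Real.norm_eq_abs,
      mul_one, sq_abs]
    ring
  have hv : ‖g - c • h‖ ^ 2 = 1 - c ^ 2 := by
    rw [@norm_sub_sq_real, hg, real_inner_smul_right, hc, norm_smul, hh, Real.norm_eq_abs,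
      mul_one, sq_abs]
    ring
  have huv : ⟪h - c • g, g - c • h⟫ = c ^ 3 - c := by
    rw [inner_sub_left, inner_sub_right, inner_sub_right, real_inner_smul_left,
      real_inner_smul_left, real_inner_smul_right, real_inner_smul_right,
      real_inner_self_eq_norm_sq, real_inner_self_eq_norm_sq, hg, hh, hgh, hc]
    ring
  have hun : ‖h - c • g‖ = Real.sqrt (1 - c ^ 2) := by
    rw [← hu]; exact (Real.sqrt_sq (norm_nonneg _)).symm
  have hvn : ‖g - c • h‖ = Real.sqrt (1 - c ^ 2) := by
    rw [← hv]; exact (Real.sqrt_sq (norm_nonneg _)).symm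
  have hs : (0:ℝ) < Real.sqrt (1 - c ^ 2) := Real.sqrt_pos.mpr hpos
  have hss : Real.sqrt (1 - c ^ 2) * Real.sqrt (1 - c ^ 2) = 1 - c ^ 2 :=
    Real.mul_self_sqrt hpos.le
  have hs0 : Real.sqrt (1 - c ^ 2) ≠ 0 := ne_of_gt hs
  unfold luneThickness sdist luneFaceCenter
  rw [hc, hgh, real_inner_smul_left, real_inner_smul_right, hun, hvn, huv]
  have heq : (Real.sqrt (1 - c ^ 2))⁻¹ * ((Real.sqrt (1 - c ^ 2))⁻¹ * (c ^ 3 - c)) = -c := by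
    field_simp
    first
    | ring1
    | (rw [Real.sq_sqrt hpos.le]; ring)
  rw [heq, Real.arccos_neg]

/-- the set defining `widthAt`. -/
def Wset (C : Set (Esp n)) (k : Esp n) : Set ℝ :=
  {t | ∃ k', Supports k' C ∧ k' ≠ k ∧ k' ≠ -k ∧ t = luneThickness k k'}

lemma widthAt_eq (C : Set (Esp n)) (k : Esp n) : widthAt C k = sInf (Wset C k) := rfl

def Tset (C : Set (Esp n)) : Set ℝ := {t | ∃ k, Supports k C ∧ t = widthAt C k}

lemma thickness_eq (C : Set (Esp n)) : thickness C = sInf (Tset C) := rfl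

lemma luneThickness_nonneg (g h : Esp n) : 0 ≤ luneThickness g h := Real.arccos_nonneg _

lemma luneThickness_le_pi (g h : Esp n) : luneThickness g h ≤ π := Real.arccos_le_pi _

lemma Wset_nonneg {C : Set (Esp n)} {k : Esp n} : ∀ t ∈ Wset C k, (0:ℝ) ≤ t := by
  rintro t ⟨k', _, _, _, rfl⟩; exact luneThickness_nonneg _ _

lemma widthAt_nonneg (C : Set (Esp n)) (k : Esp n) : 0 ≤ widthAt C k :=
  Real.sInf_nonneg Wset_nonneg

lemma Tset_nonneg {C : Set (Esp n)} : ∀ t ∈ Tset C, (0:ℝ) ≤ t := by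
  rintro t ⟨k, _, rfl⟩; exact widthAt_nonneg _ _

lemma thickness_le_widthAt {C : Set (Esp n)} {k : Esp n} (hk : Supports k C) :
    thickness C ≤ widthAt C k :=
  csInf_le ⟨0, Tset_nonneg⟩ ⟨k, hk, rfl⟩

lemma widthAt_le_lune {C : Set (Esp n)} {k k' : Esp n} (hk' : Supports k' C)
    (h1 : k' ≠ k) (h2 : k' ≠ -k) : widthAt C k ≤ luneThickness k k' :=
  csInf_le ⟨0, Wset_nonneg⟩ ⟨k', hk', h1, h2, rfl⟩

lemma arccos_lt_pi' {x : ℝ} (hx : -1 < x) : Real.arccos x < π := by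
  have h : Real.arccos (-x) = π - Real.arccos x := Real.arccos_neg x
  have h2 : 0 < Real.arccos (-x) := Real.arccos_pos.mpr (by linarith)
  linarith

lemma norm_comb {u p : Esp n} (hu : ‖u‖ = 1) (hp : ‖p‖ = 1) (hup : ⟪u, p⟫ = 0) (θ : ℝ) :
    ‖Real.cos θ • u + Real.sin θ • p‖ = 1 := by
  have h2 : ‖Real.cos θ • u + Real.sin θ • p‖ ^ 2 = 1 := by
    rw [@norm_add_sq_real, norm_smul, norm_smul, real_inner_smul_left, real_inner_smul_right,
      hup, hu, hp, Real.norm_eq_abs, Real.norm_eq_abs]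
    simp only [mul_one, sq_abs, mul_zero]
    rw [add_zero]
    exact Real.cos_sq_add_sin_sq θ
  nlinarith [norm_nonneg (Real.cos θ • u + Real.sin θ • p), h2]

lemma rot {C : Set (Esp n)} (hcomp : IsCompact C)
    {u p : Esp n}
    (h0 : ∀ x ∈ C, 0 ≤ ⟪u, x⟫) {θb : ℝ} (hθb0 : 0 < θb)
    (hneg : ∃ x ∈ C, ⟪Real.cos θb • u + Real.sin θb • p, x⟫ < 0) :
    ∃ θ, 0 ≤ θ ∧ θ < θb ∧ (∀ x ∈ C, 0 ≤ ⟪Real.cos θ • u + Real.sin θ • p, x⟫) ∧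
      ∃ x ∈ C, ⟪Real.cos θ • u + Real.sin θ • p, x⟫ = 0 := by
  set f : ℝ → Esp n := fun θ => Real.cos θ • u + Real.sin θ • p with hf
  have hfc : Continuous f := by
    rw [hf]
    exact (Real.continuous_cos.smul continuous_const).add
      (Real.continuous_sin.smul continuous_const)
  set A : Set ℝ := {θ | 0 ≤ θ ∧ θ ≤ θb ∧ ∃ x ∈ C, ⟪f θ, x⟫ < 0} with hA
  have hAmem : θb ∈ A := ⟨le_of_lt hθb0, le_refl _, hneg⟩
  have hAne : A.Nonempty := ⟨θb, hAmem⟩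
  have hAbd : BddBelow A := ⟨0, fun θ hθ => hθ.1⟩
  set θs := sInf A with hθs
  have hθs0 : 0 ≤ θs := le_csInf hAne (fun θ hθ => hθ.1)
  have hθsb : θs ≤ θb := csInf_le hAbd hAmem
  have hcont : ∀ x : Esp n, Continuous fun θ : ℝ => ⟪f θ, x⟫ :=
    fun x => (hfc.inner (continuous_const : Continuous fun _ : ℝ => x))
  have hpos : ∀ x ∈ C, 0 ≤ ⟪f θs, x⟫ := by
    by_contra hcon
    push_neg at hcon
    obtain ⟨x, hxC, hxneg⟩ := hcon
    rcases eq_or_lt_of_le hθs0 with heq | hlt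
    · have hf0 : f 0 = u := by rw [hf]; simp
      rw [← heq, hf0] at hxneg
      exact absurd (h0 x hxC) (not_le.mpr hxneg)
    · have hev : ∀ᶠ θ in nhds θs, ⟪f θ, x⟫ < 0 :=
        (hcont x).continuousAt.eventually_lt_const hxneg
      obtain ⟨δ, hδ0, hδ⟩ := Metric.eventually_nhds_iff.mp hev
      set θ' := max 0 (θs - δ/2) with hθ'
      have hθ'lt : θ' < θs := by
        apply max_lt hlt; linarith
      have hθ'd : dist θ' θs < δ := by
        rw [Real.dist_eq, abs_lt]
        constructor
        · have : θs - δ/2 ≤ θ' := le_max_right _ _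
          linarith
        · linarith [hθ'lt]
      have hθ'A : θ' ∈ A := ⟨le_max_left _ _, le_of_lt (lt_of_lt_of_le hθ'lt hθsb),
        x, hxC, hδ hθ'd⟩
      exact absurd (csInf_le hAbd hθ'A) (not_le.mpr hθ'lt)
  have htouch : ∃ x ∈ C, ⟪f θs, x⟫ = 0 := by
    have hseq : ∀ m : ℕ, ∃ θ ∈ A, θ < θs + 1/(m+1) := by
      intro m
      exact Real.lt_sInf_add_pos hAne (by positivity)
    choose θm hθmA hθmlt using hseq
    choose xm hxmC hxmneg using fun m => (hθmA m).2.2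
    obtain ⟨x, hxC, φ, hφ, hconv⟩ := hcomp.tendsto_subseq hxmC
    have hθconv : Filter.Tendsto (fun m => θm (φ m)) Filter.atTop (nhds θs) := by
      apply tendsto_of_tendsto_of_tendsto_of_le_of_le (g := fun _ : ℕ => θs)
        (h := fun m : ℕ => θs + 1/(m+1)) tendsto_const_nhds
      · have h5 : Filter.Tendsto (fun m : ℕ => θs + 1/((m:ℝ)+1)) Filter.atTop (nhds (θs + 0)) :=
          tendsto_const_nhds.add tendsto_one_div_add_atTop_nhds_zero_nat
        simpa using h5
      · intro m; exact csInf_le hAbd (hθmA (φ m))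
      · intro m
        refine le_of_lt (lt_of_lt_of_le (hθmlt (φ m)) ?_)
        have h1 : (m:ℝ) + 1 ≤ (φ m : ℝ) + 1 := by
          have h0' : m ≤ φ m := hφ.le_apply
          have h1' : (m:ℝ) ≤ (φ m : ℝ) := Nat.cast_le.mpr h0'
          linarith
        have h2 : 0 < (m:ℝ)+1 := by positivity
        have := one_div_le_one_div_of_le h2 h1
        linarith
    have hlim : Filter.Tendsto (fun m => ⟪f (θm (φ m)), xm (φ m)⟫) Filter.atTop
        (nhds ⟪f θs, x⟫) :=
      Filter.Tendsto.inner ((hfc.tendsto θs).comp hθconv) hconv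
    have hle : ⟪f θs, x⟫ ≤ 0 :=
      le_of_tendsto hlim (Filter.Eventually.of_forall fun m => le_of_lt (hxmneg (φ m)))
    exact ⟨x, hxC, le_antisymm hle (hpos x hxC)⟩
  have hne' : θs ≠ θb := by
    intro heq
    obtain ⟨x, hx, hlt⟩ := hneg
    rw [← heq] at hlt
    exact absurd (hpos x hx) (not_le.mpr hlt)
  exact ⟨θs, hθs0, lt_of_le_of_ne hθsb hne', hpos, htouch⟩


/-- Rotate a containing hemisphere direction `u` away from `v` until it supports `R`. -/
lemma rot_away {R : Set (Esp n)} (hcomp : IsCompact R) (hRs : R ⊆ unitSphere n)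
    {u v : Esp n} (hu : ‖u‖ = 1) (hv : ‖v‖ = 1) (huv : u ≠ v) (huv' : u ≠ -v)
    (h0 : ∀ x ∈ R, 0 ≤ ⟪u, x⟫) (hmax : ∃ x ∈ R, 0 < ⟪v, x⟫) :
    ∃ k, Supports k R ∧ Real.arccos ⟪v, u⟫ ≤ Real.arccos ⟪v, k⟫ := by
  obtain ⟨c, hc⟩ : ∃ c, ⟪v, u⟫ = c := ⟨_, rfl⟩
  have hvu : ⟪u, v⟫ = c := by rw [← hc]; exact real_inner_comm v u
  have hclt : c < 1 := hc ▸ inner_lt_one hv hu (fun hh => huv hh.symm)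
  have hcgt : (-1:ℝ) < c := by
    rw [← hc]
    refine neg_one_lt_inner hv hu fun hh => huv' ?_
    rw [hh]; simp
  have hpos : (0:ℝ) < 1 - c ^ 2 := by nlinarith
  set s := Real.sqrt (1 - c ^ 2) with hsdef
  have hs : 0 < s := Real.sqrt_pos.mpr hpos
  have hss : s * s = 1 - c ^ 2 := Real.mul_self_sqrt hpos.le
  set p : Esp n := s⁻¹ • (c • u - v) with hpdef
  have hw2 : ‖c • u - v‖ ^ 2 = 1 - c ^ 2 := by
    rw [@norm_sub_sq_real, norm_smul, real_inner_smul_left, hvu, hu, hv, Real.norm_eq_abs,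
      mul_one, sq_abs]
    ring
  have hwn : ‖c • u - v‖ = s := by
    rw [hsdef, ← hw2]; exact (Real.sqrt_sq (norm_nonneg _)).symm
  have hp : ‖p‖ = 1 := by
    rw [hpdef, norm_smul, hwn, Real.norm_eq_abs, abs_inv, abs_of_pos hs]
    field_simp
  have hup : ⟪u, p⟫ = 0 := by
    rw [hpdef, real_inner_smul_right, inner_sub_right, real_inner_smul_right,
      real_inner_self_eq_norm_sq, hu, hvu]
    ring
  have hvp : ⟪v, p⟫ = -s := by
    rw [hpdef, real_inner_smul_right, inner_sub_right, real_inner_smul_right, hc,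
      real_inner_self_eq_norm_sq, hv]
    have : c * c - 1 ^ 2 = -(s*s) := by rw [hss]; ring
    rw [this]
    field_simp
  set a := Real.arccos c with hadef
  have ha1 : Real.cos a = c := Real.cos_arccos hcgt.le hclt.le
  have ha2 : Real.sin a = s := by rw [hadef, Real.sin_arccos]
  have ha0 : 0 ≤ a := Real.arccos_nonneg c
  have haπ : a < π := arccos_lt_pi' hcgt
  have hfθ : ∀ θ : ℝ, ⟪v, Real.cos θ • u + Real.sin θ • p⟫ = Real.cos (θ + a) := by
    intro θ
    rw [inner_add_right, real_inner_smul_right, real_inner_smul_right, hc, hvp,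
      Real.cos_add, ← ha1, ← ha2]
    ring
  set θb := π - a with hθbdef
  have hθb0 : 0 < θb := by rw [hθbdef]; linarith
  have hneg : ∃ x ∈ R, ⟪Real.cos θb • u + Real.sin θb • p, x⟫ < 0 := by
    obtain ⟨x, hxR, hxpos⟩ := hmax
    have hfb : Real.cos θb • u + Real.sin θb • p = -v := by
      apply eq_neg_of_inner_eq_neg_one (norm_comb hu hp hup θb) hv
      rw [real_inner_comm, hfθ θb, hθbdef]
      rw [show π - a + a = π by ring, Real.cos_pi]
    refine ⟨x, hxR, ?_⟩
    rw [hfb, inner_neg_left]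
    linarith
  obtain ⟨θ, hθ0, hθlt, hθpos, x₀, hx₀, h00⟩ := rot hcomp h0 hθb0 hneg
  set k := Real.cos θ • u + Real.sin θ • p with hkdef
  have hks : Supports k R := by
    rw [supports_iff hRs]
    exact ⟨norm_comb hu hp hup θ, hθpos, x₀, hx₀, h00⟩
  refine ⟨k, hks, ?_⟩
  rw [hc, hkdef, hfθ θ, Real.arccos_cos (by linarith) (by rw [hθbdef] at hθlt; linarith)]
  rw [hadef]
  linarith

/-- A set with a strictly containing hemisphere has two distinct non-antipodal
supporting hemispheres (needs ambient dimension at least 3). -/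
lemma two_supporters {C : Set (Esp n)} (hn : 3 ≤ n) (hcomp : IsCompact C) (hne : C.Nonempty)
    (hCs : C ⊆ unitSphere n) {k₀ : Esp n} (hk₀ : ‖k₀‖ = 1) {τ : ℝ} (hτ : 0 < τ)
    (hstrict : ∀ x ∈ C, τ ≤ ⟪k₀, x⟫) :
    ∃ v₁ v₂, Supports v₁ C ∧ Supports v₂ C ∧ v₁ ≠ v₂ ∧ v₁ ≠ -v₂ := by
  classical
  have hk0ne : k₀ ≠ 0 := by
    intro h; rw [h, norm_zero] at hk₀; norm_num at hk₀
  have hdim : 2 ≤ Module.finrank ℝ ↥((ℝ ∙ k₀)ᗮ) := by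
    have h1 : Module.finrank ℝ ↥(ℝ ∙ k₀) = 1 := finrank_span_singleton hk0ne
    have h2 := Submodule.finrank_add_finrank_orthogonal (K := (ℝ ∙ k₀)) (𝕜 := ℝ)
    rw [h1, finrank_euclideanSpace_fin] at h2
    omega
  set b := stdOrthonormalBasis ℝ ↥((ℝ ∙ k₀)ᗮ) with hb
  set i0 : Fin (Module.finrank ℝ ↥((ℝ ∙ k₀)ᗮ)) := ⟨0, by omega⟩ with hi0
  set i1 : Fin (Module.finrank ℝ ↥((ℝ ∙ k₀)ᗮ)) := ⟨1, by omega⟩ with hi1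
  set q₁ : Esp n := ((b i0 : ↥((ℝ ∙ k₀)ᗮ)) : Esp n) with hq1def
  set q₂ : Esp n := ((b i1 : ↥((ℝ ∙ k₀)ᗮ)) : Esp n) with hq2def
  have hq₁n : ‖q₁‖ = 1 := by
    rw [hq1def]
    exact b.orthonormal.1 i0
  have hq₂n : ‖q₂‖ = 1 := by
    rw [hq2def]
    exact b.orthonormal.1 i1
  have hq₁₂ : ⟪q₁, q₂⟫ = 0 := by
    have h01 : i0 ≠ i1 := by
      rw [hi0, hi1]; intro h; simpa using congrArg Fin.val h
    have := b.orthonormal.2 h01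
    rw [hq1def, hq2def, ← Submodule.coe_inner]
    exact this
  have hqmem : ∀ i, ((b i : ↥((ℝ ∙ k₀)ᗮ)) : Esp n) ∈ (ℝ ∙ k₀)ᗮ := fun i => SetLike.coe_mem _
  have hkq₁ : ⟪k₀, q₁⟫ = 0 :=
    (Submodule.mem_orthogonal _ _).mp (hqmem i0) k₀ (Submodule.mem_span_singleton_self k₀)
  have hkq₂ : ⟪k₀, q₂⟫ = 0 :=
    (Submodule.mem_orthogonal _ _).mp (hqmem i1) k₀ (Submodule.mem_span_singleton_self k₀)
  have h0 : ∀ x ∈ C, 0 ≤ ⟪k₀, x⟫ := fun x hx => le_trans hτ.le (hstrict x hx)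
  obtain ⟨x₁, hx₁⟩ := hne
  have hrot : ∀ q : Esp n, ‖q‖ = 1 → ⟪k₀, q⟫ = 0 →
      ∃ θ, 0 < θ ∧ θ < π ∧ Supports (Real.cos θ • k₀ + Real.sin θ • q) C := by
    intro q hq hkq
    have hneg : ∃ x ∈ C, ⟪Real.cos π • k₀ + Real.sin π • q, x⟫ < 0 := by
      refine ⟨x₁, hx₁, ?_⟩
      rw [Real.cos_pi, Real.sin_pi]
      have : (-1 : ℝ) • k₀ + (0:ℝ) • q = -k₀ := by
        rw [zero_smul, add_zero, neg_one_smul]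
      rw [this, inner_neg_left]
      linarith [hstrict x₁ hx₁]
    obtain ⟨θ, hθ0, hθπ, hθpos, x₀, hx₀, h00⟩ := rot hcomp h0 Real.pi_pos hneg
    have hθ0' : 0 < θ := by
      rcases eq_or_lt_of_le hθ0 with heq | h
      · exfalso
        rw [← heq] at h00
        rw [Real.cos_zero, Real.sin_zero, one_smul, zero_smul, add_zero] at h00
        linarith [hstrict x₀ hx₀]
      · exact h
    refine ⟨θ, hθ0', hθπ, ?_⟩
    rw [supports_iff hCs]
    exact ⟨norm_comb hk₀ hq hkq θ, hθpos, x₀, hx₀, h00⟩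
  obtain ⟨θ₁, hθ₁0, hθ₁π, hs₁⟩ := hrot q₁ hq₁n hkq₁
  obtain ⟨θ₂, hθ₂0, hθ₂π, hs₂⟩ := hrot q₂ hq₂n hkq₂
  set v₁ := Real.cos θ₁ • k₀ + Real.sin θ₁ • q₁ with hv1
  set v₂ := Real.cos θ₂ • k₀ + Real.sin θ₂ • q₂ with hv2
  have hsin₁ : 0 < Real.sin θ₁ := Real.sin_pos_of_pos_of_lt_pi hθ₁0 hθ₁π
  have hiv₁ : ⟪q₁, v₁⟫ = Real.sin θ₁ := by
    rw [hv1, inner_add_right, real_inner_smul_right, real_inner_smul_right,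
      ← real_inner_comm q₁ k₀, hkq₁, real_inner_self_eq_norm_sq, hq₁n]
    ring
  have hiv₂ : ⟪q₁, v₂⟫ = 0 := by
    rw [hv2, inner_add_right, real_inner_smul_right, real_inner_smul_right,
      ← real_inner_comm q₁ k₀, hkq₁, hq₁₂]
    ring
  refine ⟨v₁, v₂, hs₁, hs₂, ?_, ?_⟩
  · intro h
    rw [h, hiv₂] at hiv₁
    linarith
  · intro h
    rw [h, inner_neg_right, hiv₂] at hiv₁
    linarith

/-- The cone over `R` with apex `0`. -/
def coneR (R : Set (Esp n)) : Set (Esp n) :=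
  {y | y = 0 ∨ ∃ l : ℝ, 0 < l ∧ ∃ x ∈ R, y = l • x}

/-- The dual cone of `R`, as a set. -/
def Cstar (R : Set (Esp n)) : Set (Esp n) := {u | ∀ x ∈ R, 0 ≤ ⟪u, x⟫}

/-- The circular cone around `k₀` dual to the cone of angular radius `arccos t`. -/
def Kstar (k₀ : Esp n) (t : ℝ) : Set (Esp n) :=
  {u | Real.sqrt (1 - t ^ 2) * ‖u‖ ≤ ⟪k₀, u⟫}

lemma zero_mem_Cstar (R : Set (Esp n)) : (0 : Esp n) ∈ Cstar R := by
  intro x _; rw [inner_zero_left]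

lemma zero_mem_Kstar (k₀ : Esp n) (t : ℝ) : (0 : Esp n) ∈ Kstar k₀ t := by
  show Real.sqrt (1 - t ^ 2) * ‖(0 : Esp n)‖ ≤ ⟪k₀, (0 : Esp n)⟫
  rw [norm_zero, inner_zero_right, mul_zero]

lemma Cstar_convex (R : Set (Esp n)) : Convex ℝ (Cstar R) := by
  intro u hu v hv a b ha hb _
  intro x hx
  rw [inner_add_left, real_inner_smul_left, real_inner_smul_left]
  have h1 := hu x hx
  have h2 := hv x hx
  positivity

lemma Kstar_convex (k₀ : Esp n) (t : ℝ) : Convex ℝ (Kstar k₀ t) := by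
  intro u hu v hv a b ha hb _
  show Real.sqrt (1 - t ^ 2) * ‖a • u + b • v‖ ≤ ⟪k₀, a • u + b • v⟫
  rw [inner_add_right, real_inner_smul_right, real_inner_smul_right]
  have h1 : ‖a • u + b • v‖ ≤ a * ‖u‖ + b * ‖v‖ := by
    refine le_trans (norm_add_le _ _) ?_
    rw [norm_smul, norm_smul, Real.norm_eq_abs, Real.norm_eq_abs, abs_of_nonneg ha,
      abs_of_nonneg hb]
  have hs : 0 ≤ Real.sqrt (1 - t ^ 2) := Real.sqrt_nonneg _
  have h2 := mul_le_mul_of_nonneg_left h1 hs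
  refine le_trans h2 ?_
  have h3 : Real.sqrt (1 - t ^ 2) * ‖u‖ ≤ ⟪k₀, u⟫ := hu
  have h4 : Real.sqrt (1 - t ^ 2) * ‖v‖ ≤ ⟪k₀, v⟫ := hv
  have h5 := mul_le_mul_of_nonneg_left h3 ha
  have h6 := mul_le_mul_of_nonneg_left h4 hb
  nlinarith [h5, h6]

lemma Cstar_smul (R : Set (Esp n)) {u : Esp n} (hu : u ∈ Cstar R) {l : ℝ} (hl : 0 ≤ l) :
    l • u ∈ Cstar R := by
  intro x hx
  rw [real_inner_smul_left]
  exact mul_nonneg hl (hu x hx)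

lemma Kstar_smul (k₀ : Esp n) (t : ℝ) {u : Esp n} (hu : u ∈ Kstar k₀ t) {l : ℝ} (hl : 0 ≤ l) :
    l • u ∈ Kstar k₀ t := by
  show Real.sqrt (1 - t ^ 2) * ‖l • u‖ ≤ ⟪k₀, l • u⟫
  rw [norm_smul, real_inner_smul_right, Real.norm_eq_abs, abs_of_nonneg hl]
  have h3 : Real.sqrt (1 - t ^ 2) * ‖u‖ ≤ ⟪k₀, u⟫ := hu
  nlinarith [mul_le_mul_of_nonneg_left h3 hl]

lemma coneR_closed {R : Set (Esp n)} (hcomp : IsCompact R) (hRs : R ⊆ unitSphere n)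
    (hne : R.Nonempty) : IsClosed (coneR R) := by
  apply IsSeqClosed.isClosed
  intro ys y hmem hlim
  have hrep : ∀ m, ∃ x ∈ R, ys m = ‖ys m‖ • x := by
    intro m
    rcases hmem m with h0 | ⟨l, hl, x, hx, hlx⟩
    · obtain ⟨x₀, hx₀⟩ := hne
      exact ⟨x₀, hx₀, by rw [h0, norm_zero, zero_smul]⟩
    · refine ⟨x, hx, ?_⟩
      have hxu : ‖x‖ = 1 := mem_us.mp (hRs hx)
      rw [hlx, norm_smul, hxu, mul_one, Real.norm_eq_abs, abs_of_pos hl]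
  choose xs hxsR hxse using hrep
  have hcompR := hcomp
  obtain ⟨x, hxR, φ, hφ, hconv⟩ := hcomp.tendsto_subseq hxsR
  have hnormlim : Filter.Tendsto (fun m => ‖ys (φ m)‖) Filter.atTop (nhds ‖y‖) :=
    ((continuous_norm.tendsto y).comp (hlim.comp hφ.tendsto_atTop))
  have hyslim : Filter.Tendsto (fun m => ys (φ m)) Filter.atTop (nhds y) :=
    hlim.comp hφ.tendsto_atTop
  have hyslim2 : Filter.Tendsto (fun m => ‖ys (φ m)‖ • xs (φ m)) Filter.atTop
      (nhds (‖y‖ • x)) := hnormlim.smul hconv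
  have heq : y = ‖y‖ • x := by
    have : ∀ m, ys (φ m) = ‖ys (φ m)‖ • xs (φ m) := fun m => hxse (φ m)
    have h2 : Filter.Tendsto (fun m => ys (φ m)) Filter.atTop (nhds (‖y‖ • x)) := by
      rw [show (fun m => ys (φ m)) = fun m => ‖ys (φ m)‖ • xs (φ m) from funext this]
      exact hyslim2
    exact tendsto_nhds_unique hyslim h2
  rcases eq_or_ne y 0 with rfl | hy0
  · exact Or.inl rfl
  · exact Or.inr ⟨‖y‖, norm_pos_iff.mpr hy0, x, hxR, heq⟩

lemma coneR_convex {R : Set (Esp n)} (hRs : R ⊆ unitSphere n)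
    (hanti : ∀ x ∈ R, -x ∉ R)
    (harc : ∀ a ∈ R, ∀ b ∈ R, arc a b ⊆ R) :
    Convex ℝ (coneR R) := by
  have hsm : ∀ y ∈ coneR R, ∀ μ : ℝ, 0 ≤ μ → μ • y ∈ coneR R := by
    rintro y (rfl | ⟨l, hl, x, hx, rfl⟩) μ hμ
    · exact Or.inl (smul_zero μ)
    · rcases eq_or_lt_of_le hμ with rfl | hμ'
      · exact Or.inl (zero_smul ℝ _)
      · exact Or.inr ⟨μ * l, mul_pos hμ' hl, x, hx, smul_smul μ l x⟩
  intro y₁ h₁ y₂ h₂ a b ha hb hab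
  rcases h₁ with rfl | ⟨l₁, hl₁, x₁, hx₁, rfl⟩
  · rw [smul_zero, zero_add]; exact hsm _ h₂ b hb
  rcases h₂ with rfl | ⟨l₂, hl₂, x₂, hx₂, rfl⟩
  · rw [smul_zero, add_zero]; exact hsm _ (Or.inr ⟨l₁, hl₁, x₁, hx₁, rfl⟩) a ha
  rw [smul_smul, smul_smul]
  set s := a * l₁ with hs
  set t' := b * l₂ with ht'
  have hs0 : 0 ≤ s := mul_nonneg ha hl₁.le
  have ht'0 : 0 ≤ t' := mul_nonneg hb hl₂.le
  have hx₁cone : x₁ ∈ coneR R := Or.inr ⟨1, one_pos, x₁, hx₁, (one_smul ℝ x₁).symm⟩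
  have hx₂cone : x₂ ∈ coneR R := Or.inr ⟨1, one_pos, x₂, hx₂, (one_smul ℝ x₂).symm⟩
  rcases eq_or_lt_of_le hs0 with hseq | hslt
  · rw [← hseq, zero_smul, zero_add]
    exact hsm _ hx₂cone t' ht'0
  rcases eq_or_lt_of_le ht'0 with ht'eq | ht'lt
  · rw [← ht'eq, zero_smul, add_zero]
    exact hsm _ hx₁cone s hs0
  have hx₁u : ‖x₁‖ = 1 := mem_us.mp (hRs hx₁)
  have hx₂u : ‖x₂‖ = 1 := mem_us.mp (hRs hx₂)
  have hw0 : s • x₁ + t' • x₂ ≠ 0 := by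
    intro h0
    have h1 : s • x₁ = t' • (-x₂) := by
      rw [smul_neg]
      linear_combination (norm := module) h0
    have h2 : s * ‖x₁‖ = t' * ‖x₂‖ := by
      have := congrArg norm h1
      rwa [norm_smul, norm_smul, norm_neg, Real.norm_eq_abs, Real.norm_eq_abs,
        abs_of_pos hslt, abs_of_pos ht'lt] at this
    rw [hx₁u, hx₂u, mul_one, mul_one] at h2
    have h3 : x₁ = -x₂ := by
      have h4 : s • x₁ = s • (-x₂) := by rw [h1, h2]
      exact smul_right_injective _ (ne_of_gt hslt) h4
    exact hanti x₂ hx₂ (h3 ▸ hx₁)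
  set w := s • x₁ + t' • x₂ with hwdef
  have hz : ‖w‖⁻¹ • w ∈ R := harc x₁ hx₁ x₂ hx₂ ⟨s, t', hs0, ht'0, hw0, rfl⟩
  have hwpos : 0 < ‖w‖ := norm_pos_iff.mpr hw0
  refine Or.inr ⟨‖w‖, hwpos, ‖w‖⁻¹ • w, hz, ?_⟩
  rw [smul_smul, mul_inv_cancel₀ (ne_of_gt hwpos), one_smul]

/-- Bipolar-type theorem for the cone over `R`, proved by Hahn–Banach separation. -/
lemma mem_coneR_of_dual {R : Set (Esp n)} (hclosed : IsClosed (coneR R))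
    (hconv : Convex ℝ (coneR R)) {y : Esp n}
    (hy : ∀ u ∈ Cstar R, 0 ≤ ⟪u, y⟫) : y ∈ coneR R := by
  by_contra hcon
  obtain ⟨f, u', hfy, hfb⟩ := geometric_hahn_banach_point_closed hconv hclosed hcon
  have h0C : (0 : Esp n) ∈ coneR R := Or.inl rfl
  have hu'0 : u' < 0 := by
    have := hfb 0 h0C
    rwa [map_zero] at this
  have hfR : ∀ x ∈ R, 0 ≤ f x := by
    intro x hx
    by_contra hneg
    push_neg at hneg
    set l := (u' - 1) / f x with hl
    have hl0 : 0 < l := div_pos_of_neg_of_neg (by linarith) hneg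
    have hmem : l • x ∈ coneR R := Or.inr ⟨l, hl0, x, hx, rfl⟩
    have h2 := hfb _ hmem
    rw [map_smul] at h2
    have hfx : f x ≠ 0 := ne_of_lt hneg
    have h3 : l * f x = u' - 1 := by
      rw [hl, div_mul_cancel₀ _ hfx]
    rw [smul_eq_mul, h3] at h2
    linarith
  set w := (InnerProductSpace.toDual ℝ (Esp n)).symm f with hw
  have hwip : ∀ z : Esp n, ⟪w, z⟫ = f z := fun z => InnerProductSpace.toDual_symm_apply
  have hwC : w ∈ Cstar R := fun x hx => by rw [hwip]; exact hfR x hx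
  have h9 := hy w hwC
  rw [hwip] at h9
  linarith

/-- Bipolar computation for the circular cone, by hand using test vectors. -/
lemma K_bipolar {k₀ : Esp n} (hk₀ : ‖k₀‖ = 1) {t : ℝ} (ht0 : 0 < t) (ht1 : t < 1)
    {y : Esp n} (hy : ∀ u ∈ Kstar k₀ t, 0 ≤ ⟪u, y⟫) : t * ‖y‖ ≤ ⟪k₀, y⟫ := by
  have hs2 : (0:ℝ) ≤ 1 - t ^ 2 := by nlinarith
  have hss : Real.sqrt (1 - t ^ 2) * Real.sqrt (1 - t ^ 2) = 1 - t ^ 2 :=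
    Real.mul_self_sqrt hs2
  have hk₀K : k₀ ∈ Kstar k₀ t := by
    show Real.sqrt (1 - t ^ 2) * ‖k₀‖ ≤ ⟪k₀, k₀⟫
    rw [hk₀, real_inner_self_eq_norm_sq, hk₀, mul_one]
    have h8 : Real.sqrt (1 - t ^ 2) ≤ 1 := Real.sqrt_le_one.mpr (by nlinarith)
    linarith
  set a := ⟪k₀, y⟫ with ha
  have ha0 : 0 ≤ a := hy k₀ hk₀K
  set yp := y - a • k₀ with hyp
  have hko : ⟪k₀, yp⟫ = 0 := by
    rw [hyp, inner_sub_right, real_inner_smul_right, real_inner_self_eq_norm_sq, hk₀, ← ha]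
    ring
  have hdec : y = a • k₀ + yp := by rw [hyp]; abel
  have hnorm2 : ‖y‖ ^ 2 = a ^ 2 + ‖yp‖ ^ 2 := by
    rw [hdec, @norm_add_sq_real, real_inner_smul_left, hko, norm_smul, Real.norm_eq_abs,
      hk₀, mul_one, sq_abs]
    ring
  rcases eq_or_ne yp 0 with hyp0 | hyp0
  · have : ‖y‖ = a := by
      rw [hdec, hyp0, add_zero, norm_smul, Real.norm_eq_abs, hk₀, mul_one, abs_of_nonneg ha0]
    rw [this]
    nlinarith
  · have hypn : 0 < ‖yp‖ := norm_pos_iff.mpr hyp0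
    set u := Real.sqrt (1 - t ^ 2) • k₀ - (t * ‖yp‖⁻¹) • yp with hu
    have hku : ⟪k₀, u⟫ = Real.sqrt (1 - t ^ 2) := by
      rw [hu, inner_sub_right, real_inner_smul_right, real_inner_smul_right,
        real_inner_self_eq_norm_sq, hk₀, hko]
      ring
    have hun : ‖u‖ = 1 := by
      have h2 : ‖u‖ ^ 2 = 1 := by
        rw [hu, @norm_sub_sq_real, real_inner_smul_left, real_inner_smul_right, hko,
          norm_smul, norm_smul, Real.norm_eq_abs, Real.norm_eq_abs, hk₀]
        rw [abs_of_nonneg (Real.sqrt_nonneg _), abs_of_nonneg (by positivity : (0:ℝ) ≤ t * ‖yp‖⁻¹),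
          mul_one, mul_zero]
        have hcanc : t * ‖yp‖⁻¹ * ‖yp‖ = t := by field_simp
        rw [hcanc, Real.sq_sqrt hs2]
        ring
      nlinarith [norm_nonneg u]
    have huK : u ∈ Kstar k₀ t := by
      show Real.sqrt (1 - t ^ 2) * ‖u‖ ≤ ⟪k₀, u⟫
      rw [hun, hku, mul_one]
    have hyu := hy u huK
    have hipu : ⟪u, y⟫ = Real.sqrt (1 - t ^ 2) * a - t * ‖yp‖ := by
      rw [hu, inner_sub_left, real_inner_smul_left, real_inner_smul_left]
      have h5 : ⟪yp, y⟫ = ‖yp‖ ^ 2 := by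
        rw [hdec, inner_add_right, real_inner_smul_right, ← real_inner_comm yp k₀, hko,
          real_inner_self_eq_norm_sq]
        ring
      rw [h5]
      have h6 : ‖yp‖ ≠ 0 := ne_of_gt hypn
      have h7 : (⟪k₀, y⟫ : ℝ) = a := rfl
      rw [h7]
      field_simp
    rw [hipu] at hyu
    have h7 : t * ‖yp‖ ≤ Real.sqrt (1 - t ^ 2) * a := by linarith
    have h8 : (t * ‖yp‖) ^ 2 ≤ (Real.sqrt (1 - t ^ 2) * a) ^ 2 := by
      apply sq_le_sq' _ h7
      have hA : 0 ≤ t * ‖yp‖ := mul_nonneg ht0.le (norm_nonneg yp)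
      have hB : 0 ≤ Real.sqrt (1 - t ^ 2) * a := mul_nonneg (Real.sqrt_nonneg _) ha0
      linarith only [hA, hB]
    have h6 : (t * ‖yp‖) ^ 2 ≤ (1 - t ^ 2) * a ^ 2 := by
      refine le_trans h8 (le_of_eq ?_)
      have : (Real.sqrt (1 - t ^ 2) * a) ^ 2
          = (Real.sqrt (1 - t ^ 2) * Real.sqrt (1 - t ^ 2)) * a ^ 2 := by ring
      rw [this, hss]
    have h9 : t ^ 2 * ‖y‖ ^ 2 = t ^ 2 * a ^ 2 + t ^ 2 * ‖yp‖ ^ 2 := by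
      linear_combination t ^ 2 * hnorm2
    have hfin : (t * ‖y‖) ^ 2 ≤ a ^ 2 := by nlinarith [h6, h9]
    have hC : 0 ≤ t * ‖y‖ := mul_nonneg ht0.le (norm_nonneg y)
    have hD := Real.sqrt_le_sqrt hfin
    rwa [Real.sqrt_sq hC, Real.sqrt_sq ha0] at hD

/-- The decomposition lemma: any vector with nonnegative inner products on the slab
`Z = R ∩ {t ≤ ⟪k₀,·⟫}` lies in the closure of `Cstar R + Kstar k₀ t`. -/
lemma dec {R : Set (Esp n)} (hclosedC : IsClosed (coneR R)) (hconvC : Convex ℝ (coneR R))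
    {k₀ : Esp n} (hk₀ : ‖k₀‖ = 1) {t : ℝ} (ht0 : 0 < t) (ht1 : t < 1)
    (hRs : R ⊆ unitSphere n)
    {g : Esp n} (hg : ∀ x ∈ R, t ≤ ⟪k₀, x⟫ → 0 ≤ ⟪g, x⟫) :
    g ∈ closure (Cstar R + Kstar k₀ t) := by
  by_contra hcon
  have hconv : Convex ℝ (closure (Cstar R + Kstar k₀ t)) :=
    ((Cstar_convex R).add (Kstar_convex k₀ t)).closure
  obtain ⟨f, u', hfy, hfb⟩ := geometric_hahn_banach_point_closed hconv isClosed_closure hcon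
  have h0mem : (0 : Esp n) ∈ Cstar R + Kstar k₀ t :=
    ⟨0, zero_mem_Cstar R, 0, zero_mem_Kstar k₀ t, by simp⟩
  have hu'0 : u' < 0 := by
    have := hfb 0 (subset_closure h0mem)
    rwa [map_zero] at this
  have hfnonneg : ∀ s ∈ Cstar R + Kstar k₀ t, 0 ≤ f s := by
    rintro s hs
    by_contra hneg
    push_neg at hneg
    set l := (u' - 1) / f s with hl
    have hl0 : 0 < l := div_pos_of_neg_of_neg (by linarith) hneg
    have hls : l • s ∈ Cstar R + Kstar k₀ t := by
      obtain ⟨p, hp, c, hc, rfl⟩ := hs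
      exact ⟨l • p, Cstar_smul R hp hl0.le, l • c, Kstar_smul k₀ t hc hl0.le,
        by show l • p + l • c = l • (p + c); rw [smul_add]⟩
    have h2 := hfb _ (subset_closure hls)
    rw [map_smul, smul_eq_mul] at h2
    have hfx : f s ≠ 0 := ne_of_lt hneg
    have h3 : l * f s = u' - 1 := by
      rw [hl, div_mul_eq_mul_div, mul_div_assoc, div_self hfx, mul_one]
    rw [h3] at h2
    linarith
  set w := (InnerProductSpace.toDual ℝ (Esp n)).symm f with hw
  have hwip : ∀ z : Esp n, ⟪w, z⟫ = f z := fun z => InnerProductSpace.toDual_symm_apply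
  have hwC : ∀ u ∈ Cstar R, 0 ≤ ⟪u, w⟫ := by
    intro u hu
    rw [real_inner_comm, hwip]
    exact hfnonneg u ⟨u, hu, 0, zero_mem_Kstar k₀ t, add_zero u⟩
  have hwK : ∀ u ∈ Kstar k₀ t, 0 ≤ ⟪u, w⟫ := by
    intro u hu
    rw [real_inner_comm, hwip]
    exact hfnonneg u ⟨0, zero_mem_Cstar R, u, hu, zero_add u⟩
  have hwcone : w ∈ coneR R := mem_coneR_of_dual hclosedC hconvC hwC
  have hwKb : t * ‖w‖ ≤ ⟪k₀, w⟫ := K_bipolar hk₀ ht0 ht1 hwK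
  have hfg : f g < 0 := lt_trans hfy hu'0
  rcases hwcone with h0w | ⟨l, hl, x, hx, hwlx⟩
  · have h5 : f g = 0 := by
      rw [← hwip g, h0w, inner_zero_left]
    linarith
  · have hxu : ‖x‖ = 1 := mem_us.mp (hRs hx)
    have hxt : t ≤ ⟪k₀, x⟫ := by
      rw [hwlx, real_inner_smul_right, norm_smul, Real.norm_eq_abs, abs_of_pos hl, hxu,
        mul_one] at hwKb
      nlinarith
    have h4 : 0 ≤ ⟪g, x⟫ := hg x hx hxt
    have h5 : f g = l * ⟪g, x⟫ := by
      rw [← hwip g, hwlx, real_inner_smul_left, real_inner_comm x g]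
    rw [h5] at hfg
    nlinarith


lemma ne_neg_symm {x y : Esp n} (h : x ≠ -y) : y ≠ -x := by
  intro hh
  apply h
  rw [hh]
  simp

lemma scale_ineq {γ : ℝ} (hγ : 0 ≤ γ) {p c : Esp n}
    (h : p ≠ 0 → c ≠ 0 → γ ≤ ⟪‖p‖⁻¹ • p, ‖c‖⁻¹ • c⟫) :
    γ * (‖p‖ * ‖c‖) ≤ ⟪p, c⟫ := by
  rcases eq_or_ne p 0 with rfl | hp
  · rw [inner_zero_left, norm_zero]
    nlinarith
  rcases eq_or_ne c 0 with rfl | hc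
  · rw [inner_zero_right, norm_zero]
    nlinarith
  have hpn : 0 < ‖p‖ := norm_pos_iff.mpr hp
  have hcn : 0 < ‖c‖ := norm_pos_iff.mpr hc
  have h2 := h hp hc
  rw [real_inner_smul_left, real_inner_smul_right] at h2
  have h3 := mul_le_mul_of_nonneg_left h2 (mul_pos hpn hcn).le
  have h4 : ‖p‖ * ‖c‖ * (‖p‖⁻¹ * (‖c‖⁻¹ * ⟪p, c⟫)) = ⟪p, c⟫ := by
    field_simp
  nlinarith [h3, h4]

lemma norm_normalize {p : Esp n} (hp : p ≠ 0) : ‖‖p‖⁻¹ • p‖ = 1 := by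
  rw [norm_smul, Real.norm_eq_abs, abs_inv, abs_of_pos (norm_pos_iff.mpr hp)]
  exact inv_mul_cancel₀ (ne_of_gt (norm_pos_iff.mpr hp))



lemma arccos_le_arccos' {x y : ℝ} (h : x ≤ y) : Real.arccos y ≤ Real.arccos x := by
  have h2 := Real.monotone_arcsin h
  simp only [Real.arccos]
  linarith

lemma suppSet_isCompact {R : Set (Esp n)} (hcomp : IsCompact R) (hRs : R ⊆ unitSphere n) :
    IsCompact {k : Esp n | Supports k R} := by
  have hclosed : IsClosed {k : Esp n | Supports k R} := by
    apply IsSeqClosed.isClosed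
    intro ks k hmem hlim
    have hmem' := fun m => (supports_iff hRs).mp (hmem m)
    have hnorm : ∀ m, ‖ks m‖ = 1 := fun m => (hmem' m).1
    have hpos : ∀ m, ∀ x ∈ R, 0 ≤ ⟪ks m, x⟫ := fun m => (hmem' m).2.1
    choose pm hpmR hpm0 using fun m => (hmem' m).2.2
    rw [Set.mem_setOf_eq, supports_iff hRs]
    refine ⟨?_, ?_, ?_⟩
    · have h2 : Filter.Tendsto (fun m => ‖ks m‖) Filter.atTop (nhds ‖k‖) :=
        (continuous_norm.tendsto k).comp hlim
      have h3 : (fun m => ‖ks m‖) = fun _ => 1 := funext hnorm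
      rw [h3] at h2
      exact tendsto_nhds_unique h2 tendsto_const_nhds
    · intro x hx
      have h2 : Filter.Tendsto (fun m => ⟪ks m, x⟫) Filter.atTop (nhds ⟪k, x⟫) :=
        hlim.inner tendsto_const_nhds
      exact le_of_tendsto_of_tendsto' tendsto_const_nhds h2 (fun m => hpos m x hx)
    · obtain ⟨p, hpR, φ, hφ, hconv⟩ := hcomp.tendsto_subseq hpmR
      refine ⟨p, hpR, ?_⟩
      have h2 : Filter.Tendsto (fun m => ⟪ks (φ m), pm (φ m)⟫) Filter.atTop (nhds ⟪k, p⟫) :=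
        (hlim.comp hφ.tendsto_atTop).inner hconv
      have h3 : (fun m => ⟪ks (φ m), pm (φ m)⟫) = fun _ => 0 := funext fun m => hpm0 (φ m)
      rw [h3] at h2
      exact tendsto_nhds_unique h2 tendsto_const_nhds
  exact (isCompact_sphere 0 1).of_isClosed_subset hclosed (fun k hk => hk.1)

end SphAux

open SphAux

set_option maxHeartbeats 3200000 in
/-- A reduced spherically convex body `R ⊂ S^d` with `Δ(R) ≥ π/2` is a
body of constant width `Δ(R)`. -/
theorem constWidth_of_reduced_thickness_ge (d : ℕ) (hd : 2 ≤ d)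
    (R : Set (Esp (d + 1))) (hR : IsReduced R)
    (hth : Real.pi / 2 ≤ thickness R) :
    IsConstWidth R (thickness R) := by
  classical
  intro k₀ hk₀S
  obtain ⟨⟨hclosed, ⟨hRs, hanti, harc⟩, xh, hxhR, ε, hε, hball⟩, hred⟩ := hR
  have hcomp : IsCompact R :=
    (isCompact_sphere (0 : Esp (d+1)) 1).of_isClosed_subset hclosed hRs
  have hxhu : ‖xh‖ = 1 := mem_us.mp (hRs hxhR)
  obtain ⟨hk₀u, hk₀pos, p₀, hp₀R, hp₀0⟩ := (supports_iff hRs).mp hk₀S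
  -- the perturbation device
  set δ : ℝ := min (ε/3) (1/2) with hδdef
  have hδ0 : 0 < δ := lt_min (by linarith) (by norm_num)
  have hδε : δ ≤ ε/3 := min_le_left _ _
  have hδhalf : δ ≤ 1/2 := min_le_right _ _
  have hpert : ∀ u : Esp (d+1), ‖u‖ = 1 →
      (xh + δ • u) ≠ 0 ∧ ‖xh + δ • u‖⁻¹ • (xh + δ • u) ∈ R := by
    intro u hu
    have hδu : ‖δ • u‖ = δ := by
      rw [norm_smul, Real.norm_eq_abs, abs_of_pos hδ0, hu, mul_one]
    have hlow : 1 - δ ≤ ‖xh + δ • u‖ := by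
      have h1 : ‖xh‖ ≤ ‖xh + δ • u‖ + ‖δ • u‖ := by
        calc ‖xh‖ = ‖(xh + δ • u) - δ • u‖ := by rw [add_sub_cancel_right]
        _ ≤ ‖xh + δ • u‖ + ‖δ • u‖ := norm_sub_le _ _
      rw [hδu] at h1
      rw [hxhu] at h1
      linarith
    have hup : ‖xh + δ • u‖ ≤ 1 + δ := by
      have h1 := norm_add_le xh (δ • u)
      rw [hδu, hxhu] at h1
      exact h1
    have hwpos : 0 < ‖xh + δ • u‖ := by linarith
    have hwne : (xh + δ • u) ≠ 0 := norm_pos_iff.mp hwpos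
    refine ⟨hwne, hball ⟨?_, ?_⟩⟩
    · rw [Metric.mem_ball, dist_eq_norm]
      have h2 : ‖‖xh + δ • u‖⁻¹ • (xh + δ • u) - (xh + δ • u)‖ = |1 - ‖xh + δ • u‖| := by
        rw [show ‖xh + δ • u‖⁻¹ • (xh + δ • u) - (xh + δ • u)
            = (‖xh + δ • u‖⁻¹ - 1) • (xh + δ • u) by rw [sub_smul, one_smul]]
        rw [norm_smul, Real.norm_eq_abs]
        rw [show |‖xh + δ • u‖⁻¹ - 1| * ‖xh + δ • u‖
            = |(‖xh + δ • u‖⁻¹ - 1) * ‖xh + δ • u‖| by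
          rw [abs_mul, abs_of_pos hwpos]]
        have h21 : (‖xh + δ • u‖⁻¹ - 1) * ‖xh + δ • u‖ = 1 - ‖xh + δ • u‖ := by
          field_simp
        rw [h21]
      have h3 : ‖‖xh + δ • u‖⁻¹ • (xh + δ • u) - xh‖
          ≤ |1 - ‖xh + δ • u‖| + δ := by
        calc ‖‖xh + δ • u‖⁻¹ • (xh + δ • u) - xh‖
            ≤ ‖‖xh + δ • u‖⁻¹ • (xh + δ • u) - (xh + δ • u)‖ + ‖(xh + δ • u) - xh‖ := by
              have := norm_sub_le_norm_sub_add_norm_sub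
                (‖xh + δ • u‖⁻¹ • (xh + δ • u)) (xh + δ • u) xh
              exact this
        _ = |1 - ‖xh + δ • u‖| + δ := by rw [h2, add_sub_cancel_left, hδu]
      have h4 : |1 - ‖xh + δ • u‖| ≤ δ := by
        rw [abs_le]
        constructor <;> linarith
      calc ‖‖xh + δ • u‖⁻¹ • (xh + δ • u) - xh‖ ≤ |1 - ‖xh + δ • u‖| + δ := h3
      _ ≤ 2 * δ := by linarith
      _ < ε := by linarith
    · rw [mem_us]
      exact norm_normalize hwne
  have hposmax : ∀ v : Esp (d+1), ‖v‖ = 1 → (∀ x ∈ R, 0 ≤ ⟪v, x⟫) → ∃ x ∈ R, 0 < ⟪v, x⟫ := by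
    intro v hv hvpos
    obtain ⟨hwne, hmem⟩ := hpert v hv
    refine ⟨_, hmem, ?_⟩
    rw [real_inner_smul_right, inner_add_right, real_inner_smul_right,
      real_inner_self_eq_norm_sq, hv]
    have h1 : 0 ≤ ⟪v, xh⟫ := hvpos xh hxhR
    have h2 : 0 < ‖xh + δ • v‖ := norm_pos_iff.mpr hwne
    have h3 : 0 < ⟪v, xh⟫ + δ * 1 ^ 2 := by nlinarith
    exact mul_pos (inv_pos.mpr h2) h3
  have hμpos : 0 < ⟪k₀, xh⟫ := by
    obtain ⟨hwne, hmem⟩ := hpert (-k₀) (by rw [norm_neg]; exact hk₀u)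
    have h1 : 0 ≤ ⟪k₀, ‖xh + δ • (-k₀)‖⁻¹ • (xh + δ • (-k₀))⟫ := hk₀pos _ hmem
    rw [real_inner_smul_right, inner_add_right, real_inner_smul_right, inner_neg_right,
      real_inner_self_eq_norm_sq, hk₀u] at h1
    have h2 : 0 < ‖xh + δ • (-k₀)‖ := norm_pos_iff.mpr hwne
    have h3 : 0 ≤ ⟪k₀, xh⟫ + δ * -(1 ^ 2 : ℝ) := by
      by_contra hcc
      push_neg at hcc
      have h4 := mul_neg_of_pos_of_neg (inv_pos.mpr h2) hcc
      linarith
    nlinarith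
  have hnoanti : ∀ k : Esp (d+1), Supports k R → ¬ Supports (-k) R := by
    intro k hkS hkS'
    obtain ⟨hku, hkpos, -⟩ := (supports_iff hRs).mp hkS
    obtain ⟨-, hkpos', -⟩ := (supports_iff hRs).mp hkS'
    obtain ⟨x, hx, hxpos⟩ := hposmax k hku hkpos
    have h1 := hkpos' x hx
    rw [inner_neg_left] at h1
    linarith
  -- the two inequalities
  have hge : thickness R ≤ widthAt R k₀ := thickness_le_widthAt hk₀S
  refine le_antisymm ?_ hge
  by_contra hcon
  push_neg at hcon
  have hΔpos : 0 < thickness R := lt_of_lt_of_le (by positivity) hth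
  -- the Wset of k₀ is nonempty, giving thickness R < π
  have hWne : (Wset R k₀).Nonempty := by
    by_contra hemp
    rw [Set.not_nonempty_iff_eq_empty] at hemp
    have h1 : widthAt R k₀ = 0 := by rw [widthAt_eq, hemp, Real.sInf_empty]
    rw [h1] at hcon
    linarith
  have hΔπ : thickness R < π := by
    obtain ⟨τ₀, k', hk'S, hk'ne, hk'ne', hτ₀⟩ := hWne
    have h1 : widthAt R k₀ ≤ luneThickness k₀ k' := widthAt_le_lune hk'S hk'ne hk'ne'
    have hk'u : ‖k'‖ = 1 := supports_norm hk'S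
    have h2 : luneThickness k₀ k' < π := by
      rw [luneThickness_eq hk₀u hk'u (Ne.symm hk'ne) (ne_neg_symm hk'ne')]
      have h3 : 0 < Real.arccos ⟪k₀, k'⟫ :=
        Real.arccos_pos.mpr (inner_lt_one hk₀u hk'u (Ne.symm hk'ne))
      linarith
    linarith
  set D := π - thickness R with hD
  have hD0 : 0 < D := by rw [hD]; linarith
  have hDhalf : D ≤ π/2 := by rw [hD]; linarith
  have hDπ : D ≤ π := by linarith [Real.pi_pos]
  -- pair bound for supporters
  have hSpair : ∀ k k' : Esp (d+1), Supports k R → Supports k' R → k' ≠ k → k' ≠ -k →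
      Real.arccos ⟪k, k'⟫ ≤ D := by
    intro k k' hkS hk'S h1 h2
    have h3 : thickness R ≤ luneThickness k k' :=
      le_trans (thickness_le_widthAt hkS) (widthAt_le_lune hk'S h1 h2)
    rw [luneThickness_eq (supports_norm hkS) (supports_norm hk'S) (Ne.symm h1)
      (ne_neg_symm h2)] at h3
    rw [hD]
    linarith
  -- the supporting set and the maximal distance from k₀
  have hSScomp : IsCompact {k : Esp (d+1) | Supports k R} := suppSet_isCompact hcomp hRs
  obtain ⟨k₁, hk₁S, hk₁min⟩ := hSScomp.exists_isMinOn ⟨k₀, hk₀S⟩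
    ((continuous_const.inner continuous_id).continuousOn
      (f := fun k : Esp (d+1) => ⟪k₀, k⟫))
  set rS := Real.arccos ⟪k₀, k₁⟫ with hrS
  have hrS0 : 0 ≤ rS := Real.arccos_nonneg _
  have hrSπ : rS ≤ π := Real.arccos_le_pi _
  have hrSub : ∀ k : Esp (d+1), Supports k R → Real.arccos ⟪k₀, k⟫ ≤ rS := by
    intro k hk
    exact arccos_le_arccos' (hk₁min hk)
  have hrSD : rS < D := by
    rcases eq_or_ne k₁ k₀ with rfl | h1
    · rw [hrS, real_inner_self_eq_norm_sq, hk₀u, one_pow, Real.arccos_one]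
      exact hD0
    rcases eq_or_ne k₁ (-k₀) with rfl | h2
    · exact absurd hk₁S (hnoanti k₀ hk₀S)
    · have h3 : widthAt R k₀ ≤ luneThickness k₀ k₁ := widthAt_le_lune hk₁S h1 h2
      rw [luneThickness_eq hk₀u (supports_norm hk₁S) (Ne.symm h1) (ne_neg_symm h2)] at h3
      rw [hrS, hD]
      linarith
  -- bound for all "dual" unit vectors
  have hUBND : ∀ u : Esp (d+1), ‖u‖ = 1 → (∀ x ∈ R, 0 ≤ ⟪u, x⟫) →
      Real.arccos ⟪k₀, u⟫ ≤ rS := by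
    intro u hu hupos
    rcases eq_or_ne u k₀ with rfl | h1
    · rw [real_inner_self_eq_norm_sq, hu, one_pow, Real.arccos_one]
      exact hrS0
    rcases eq_or_ne u (-k₀) with rfl | h2
    · exfalso
      obtain ⟨x, hx, hxpos⟩ := hposmax k₀ hk₀u hk₀pos
      have h3 := hupos x hx
      rw [inner_neg_left] at h3
      linarith
    · obtain ⟨k, hkS, hb⟩ := rot_away hcomp hRs hu hk₀u h1 h2 hupos
        (hposmax k₀ hk₀u hk₀pos)
      exact le_trans hb (hrSub k hkS)
  -- F1 : all pairs of dual unit vectors make angle at most D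
  have hF1 : ∀ u v : Esp (d+1), ‖u‖ = 1 → (∀ x ∈ R, 0 ≤ ⟪u, x⟫) → ‖v‖ = 1 →
      (∀ x ∈ R, 0 ≤ ⟪v, x⟫) → Real.arccos ⟪u, v⟫ ≤ D := by
    intro u v hu hupos hv hvpos
    rcases eq_or_ne u v with rfl | huv
    · rw [real_inner_self_eq_norm_sq, hu, one_pow, Real.arccos_one]
      exact hD0.le
    rcases eq_or_ne u (-v) with rfl | huv'
    · exfalso
      obtain ⟨x, hx, hxpos⟩ := hposmax v hv hvpos
      have h3 := hupos x hx
      rw [inner_neg_left] at h3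
      linarith
    obtain ⟨w1, hw1S, hb1⟩ := rot_away hcomp hRs hu hv huv huv' hupos
      (hposmax v hv hvpos)
    obtain ⟨hw1u, hw1pos, -⟩ := (supports_iff hRs).mp hw1S
    have hcomm0 : Real.arccos ⟪u, v⟫ = Real.arccos ⟪v, u⟫ := by
      rw [real_inner_comm]
    rcases eq_or_ne v w1 with rfl | hvw1
    · rw [hcomm0]
      refine le_trans hb1 ?_
      rw [real_inner_self_eq_norm_sq, hv, one_pow, Real.arccos_one]
      exact hD0.le
    rcases eq_or_ne v (-w1) with rfl | hvw1'
    · exfalso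
      obtain ⟨x, hx, hxpos⟩ := hposmax w1 hw1u hw1pos
      have h3 := hvpos x hx
      rw [inner_neg_left] at h3
      linarith
    obtain ⟨w2, hw2S, hb2⟩ := rot_away hcomp hRs hv hw1u hvw1 hvw1' hvpos
      (hposmax w1 hw1u hw1pos)
    have hfinal : Real.arccos ⟪w1, w2⟫ ≤ D := by
      rcases eq_or_ne w2 w1 with rfl | h1
      · rw [real_inner_self_eq_norm_sq, hw1u, one_pow, Real.arccos_one]
        exact hD0.le
      rcases eq_or_ne w2 (-w1) with rfl | h2
      · exact absurd hw2S (hnoanti w1 hw1S)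
      · exact hSpair w1 w2 hw1S hw2S h1 h2
    have hcomm1 : Real.arccos ⟪v, w1⟫ = Real.arccos ⟪w1, v⟫ := by rw [real_inner_comm]
    rw [hcomm0]
    calc Real.arccos ⟪v, u⟫ ≤ Real.arccos ⟪v, w1⟫ := hb1
    _ = Real.arccos ⟪w1, v⟫ := hcomm1
    _ ≤ Real.arccos ⟪w1, w2⟫ := hb2
    _ ≤ D := hfinal
  -- cosine facts
  have hcosrD : Real.cos D < Real.cos rS := by
    have h1 : rS ∈ Set.Icc 0 π := ⟨hrS0, hrSπ⟩
    have h2 : D ∈ Set.Icc 0 π := ⟨hD0.le, hDπ⟩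
    exact Real.strictAntiOn_cos h1 h2 hrSD
  have hcosD1 : Real.cos D < 1 := by
    have h1 : (0:ℝ) ∈ Set.Icc 0 π := ⟨le_refl 0, Real.pi_pos.le⟩
    have h2 : D ∈ Set.Icc 0 π := ⟨hD0.le, hDπ⟩
    have h3 := Real.strictAntiOn_cos h1 h2 hD0
    rwa [Real.cos_zero] at h3
  have hcosD0 : 0 ≤ Real.cos D := Real.cos_nonneg_of_mem_Icc ⟨by linarith, hDhalf⟩
  -- choice of t
  set t : ℝ := min (⟪k₀, xh⟫/2) (min ((Real.cos rS - Real.cos D)/2)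
    ((1 - Real.cos D)/3)) with htdef
  have ht0 : 0 < t := lt_min (by linarith) (lt_min (by linarith) (by linarith))
  have htμ : t < ⟪k₀, xh⟫ := lt_of_le_of_lt (min_le_left _ _) (by linarith)
  have htγ : 2 * t ≤ Real.cos rS - Real.cos D := by
    have h1 : t ≤ (Real.cos rS - Real.cos D)/2 :=
      le_trans (min_le_right _ _) (min_le_left _ _)
    linarith
  have ht3 : 3 * t ≤ 1 - Real.cos D := by
    have h1 : t ≤ (1 - Real.cos D)/3 :=
      le_trans (min_le_right _ _) (min_le_right _ _)
    linarith
  have ht1 : t < 1 := by linarith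
  -- Kstar unit facts
  have hKhat : ∀ c : Esp (d+1), c ∈ Kstar k₀ t → c ≠ 0 →
      Real.sqrt (1 - t^2) ≤ ⟪k₀, ‖c‖⁻¹ • c⟫ ∧ ‖‖c‖⁻¹ • c - k₀‖ ≤ 2 * t := by
    intro c hc hc0
    have hcn : 0 < ‖c‖ := norm_pos_iff.mpr hc0
    have h1 : Real.sqrt (1 - t^2) * ‖c‖ ≤ ⟪k₀, c⟫ := hc
    have h2 : Real.sqrt (1 - t^2) ≤ ⟪k₀, ‖c‖⁻¹ • c⟫ := by
      rw [real_inner_smul_right]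
      rw [show Real.sqrt (1 - t^2) = ‖c‖⁻¹ * (Real.sqrt (1 - t^2) * ‖c‖) by field_simp]
      exact mul_le_mul_of_nonneg_left h1 (inv_pos.mpr hcn).le
    refine ⟨h2, ?_⟩
    have hcu : ‖‖c‖⁻¹ • c‖ = 1 := norm_normalize hc0
    have h3 : ‖‖c‖⁻¹ • c - k₀‖^2 = 2 - 2 * ⟪k₀, ‖c‖⁻¹ • c⟫ := by
      rw [@norm_sub_sq_real, hcu, hk₀u, real_inner_comm]
      ring
    have hsq : 1 - t^2 ≤ Real.sqrt (1 - t^2) := by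
      have h4 : (0:ℝ) ≤ 1 - t^2 := by nlinarith
      have h5 : (1 - t^2)^2 ≤ 1 - t^2 := by nlinarith
      have h6 := Real.sqrt_le_sqrt h5
      rwa [Real.sqrt_sq h4] at h6
    have h7 : ‖‖c‖⁻¹ • c - k₀‖^2 ≤ (2*t)^2 := by nlinarith
    have h8 := Real.sqrt_le_sqrt h7
    rwa [Real.sqrt_sq (norm_nonneg _), Real.sqrt_sq (by linarith : (0:ℝ) ≤ 2*t)] at h8
  -- Cstar unit facts
  have hChat : ∀ p : Esp (d+1), p ∈ Cstar R → p ≠ 0 →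
      (‖‖p‖⁻¹ • p‖ = 1 ∧ ∀ x ∈ R, 0 ≤ ⟪‖p‖⁻¹ • p, x⟫) := by
    intro p hp hp0
    refine ⟨norm_normalize hp0, fun x hx => ?_⟩
    rw [real_inner_smul_left]
    exact mul_nonneg (by positivity) (hp x hx)
  -- the four generator bounds
  have hPP : ∀ p ∈ Cstar R, ∀ p' ∈ Cstar R, Real.cos D * (‖p‖ * ‖p'‖) ≤ ⟪p, p'⟫ := by
    intro p hp p' hp'
    apply scale_ineq hcosD0
    intro hp0 hp'0
    obtain ⟨hpu, hppos⟩ := hChat p hp hp0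
    obtain ⟨hp'u, hp'pos⟩ := hChat p' hp' hp'0
    have h1 := hF1 _ _ hpu hppos hp'u hp'pos
    have h2 := Real.cos_le_cos_of_nonneg_of_le_pi (Real.arccos_nonneg _) hDπ h1
    rwa [Real.cos_arccos (neg_one_le_inner hpu hp'u) (inner_le_one hpu hp'u)] at h2
  have hPC : ∀ p ∈ Cstar R, ∀ c ∈ Kstar k₀ t, Real.cos D * (‖p‖ * ‖c‖) ≤ ⟪p, c⟫ := by
    intro p hp c hc
    apply scale_ineq hcosD0
    intro hp0 hc0
    obtain ⟨hpu, hppos⟩ := hChat p hp hp0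
    obtain ⟨hck, hcd⟩ := hKhat c hc hc0
    have h1 := hUBND _ hpu hppos
    have h2 := Real.cos_le_cos_of_nonneg_of_le_pi (Real.arccos_nonneg _) hrSπ h1
    rw [Real.cos_arccos (neg_one_le_inner hk₀u hpu) (inner_le_one hk₀u hpu)] at h2
    -- h2 : cos rS ≤ ⟪k₀, p̂⟫
    have h3 : ⟪‖p‖⁻¹ • p, ‖c‖⁻¹ • c⟫
        = ⟪‖p‖⁻¹ • p, k₀⟫ + ⟪‖p‖⁻¹ • p, ‖c‖⁻¹ • c - k₀⟫ := by
      have h31 : k₀ + (‖c‖⁻¹ • c - k₀) = ‖c‖⁻¹ • c := by abel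
      rw [← inner_add_right, h31]
    have h4 : -(2*t) ≤ ⟪‖p‖⁻¹ • p, ‖c‖⁻¹ • c - k₀⟫ := by
      have h5 := abs_real_inner_le_norm (‖p‖⁻¹ • p) (‖c‖⁻¹ • c - k₀)
      rw [hpu, one_mul] at h5
      have h6 := abs_le.mp (le_trans h5 hcd)
      exact h6.1
    have h7 : ⟪‖p‖⁻¹ • p, k₀⟫ = ⟪k₀, ‖p‖⁻¹ • p⟫ := real_inner_comm _ _
    rw [h3, h7]
    linarith
  have hCP : ∀ c ∈ Kstar k₀ t, ∀ p ∈ Cstar R, Real.cos D * (‖c‖ * ‖p‖) ≤ ⟪c, p⟫ := by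
    intro c hc p hp
    have h1 := hPC p hp c hc
    calc Real.cos D * (‖c‖ * ‖p‖) = Real.cos D * (‖p‖ * ‖c‖) := by ring
    _ ≤ ⟪p, c⟫ := h1
    _ = ⟪c, p⟫ := real_inner_comm c p
  have hCC : ∀ c ∈ Kstar k₀ t, ∀ c' ∈ Kstar k₀ t,
      Real.cos D * (‖c‖ * ‖c'‖) ≤ ⟪c, c'⟫ := by
    intro c hc c' hc'
    apply scale_ineq hcosD0
    intro hc0 hc'0
    obtain ⟨hck, hcd⟩ := hKhat c hc hc0
    obtain ⟨hc'k, hc'd⟩ := hKhat c' hc' hc'0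
    have hcu : ‖‖c‖⁻¹ • c‖ = 1 := norm_normalize hc0
    have hc'u : ‖‖c'‖⁻¹ • c'‖ = 1 := norm_normalize hc'0
    have h3 : ⟪‖c‖⁻¹ • c, ‖c'‖⁻¹ • c'⟫
        = ⟪k₀, ‖c'‖⁻¹ • c'⟫ + ⟪‖c‖⁻¹ • c - k₀, ‖c'‖⁻¹ • c'⟫ := by
      have h31 : k₀ + (‖c‖⁻¹ • c - k₀) = ‖c‖⁻¹ • c := by abel
      rw [← inner_add_left, h31]
    have h4 : -(2*t) ≤ ⟪‖c‖⁻¹ • c - k₀, ‖c'‖⁻¹ • c'⟫ := by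
      have h5 := abs_real_inner_le_norm (‖c‖⁻¹ • c - k₀) (‖c'‖⁻¹ • c')
      rw [hc'u, mul_one] at h5
      have h6 := abs_le.mp (le_trans h5 hcd)
      exact h6.1
    have hsq : 1 - t^2 ≤ Real.sqrt (1 - t^2) := by
      have ha : (0:ℝ) ≤ 1 - t^2 := by nlinarith
      have hb : (1 - t^2)^2 ≤ 1 - t^2 := by nlinarith
      have hcq := Real.sqrt_le_sqrt hb
      rwa [Real.sqrt_sq ha] at hcq
    rw [h3]
    nlinarith [hc'k, h4, hsq, ht0.le, ht1.le]
  -- combined generator bound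
  have hgen : ∀ a ∈ Cstar R + Kstar k₀ t, ∀ b ∈ Cstar R + Kstar k₀ t,
      Real.cos D * (‖a‖ * ‖b‖) ≤ ⟪a, b⟫ := by
    rintro a ⟨p, hp, c, hc, rfl⟩ b ⟨p', hp', c', hc', rfl⟩
    have h1 := hPP p hp p' hp'
    have h2 := hPC p hp c' hc'
    have h3 := hCP c hc p' hp'
    have h4 := hCC c hc c' hc'
    have hsum : ⟪p + c, p' + c'⟫ = ⟪p, p'⟫ + ⟪p, c'⟫ + ⟪c, p'⟫ + ⟪c, c'⟫ := by
      rw [inner_add_left, inner_add_right, inner_add_right]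
      ring
    have hna : ‖p + c‖ ≤ ‖p‖ + ‖c‖ := norm_add_le _ _
    have hnb : ‖p' + c'‖ ≤ ‖p'‖ + ‖c'‖ := norm_add_le _ _
    have h5 : Real.cos D * (‖p + c‖ * ‖p' + c'‖)
        ≤ Real.cos D * ((‖p‖ + ‖c‖) * (‖p'‖ + ‖c'‖)) := by
      apply mul_le_mul_of_nonneg_left _ hcosD0
      exact mul_le_mul hna hnb (norm_nonneg _) (by positivity)
    rw [hsum]
    nlinarith [h5, h1, h2, h3, h4]
  -- the slab body Z
  set Z : Set (Esp (d+1)) := {x | x ∈ R ∧ t ≤ ⟪k₀, x⟫} with hZdef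
  have hZsub : Z ⊆ R := fun x hx => hx.1
  have hZs : Z ⊆ unitSphere (d+1) := fun x hx => hRs hx.1
  have hZclosed : IsClosed Z := by
    have h1 : IsClosed {x : Esp (d+1) | t ≤ ⟪k₀, x⟫} :=
      isClosed_le continuous_const (continuous_const.inner continuous_id)
    exact hclosed.inter h1
  have hZcomp : IsCompact Z := hcomp.of_isClosed_subset hZclosed hZsub
  have hxhZ : xh ∈ Z := ⟨hxhR, htμ.le⟩
  have hZarc : ∀ a ∈ Z, ∀ b ∈ Z, arc a b ⊆ Z := by
    rintro a ha b hb z ⟨s, t', hs, ht', hne0, rfl⟩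
    refine ⟨harc a ha.1 b hb.1 ⟨s, t', hs, ht', hne0, rfl⟩, ?_⟩
    have hau : ‖a‖ = 1 := mem_us.mp (hRs ha.1)
    have hbu : ‖b‖ = 1 := mem_us.mp (hRs hb.1)
    have hN : 0 < ‖s • a + t' • b‖ := norm_pos_iff.mpr hne0
    have hNle : ‖s • a + t' • b‖ ≤ s + t' := by
      refine le_trans (norm_add_le _ _) ?_
      rw [norm_smul, norm_smul, Real.norm_eq_abs, Real.norm_eq_abs, abs_of_nonneg hs,
        abs_of_nonneg ht', hau, hbu, mul_one, mul_one]
    have hip : (s + t') * t ≤ ⟪k₀, s • a + t' • b⟫ := by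
      rw [inner_add_right, real_inner_smul_right, real_inner_smul_right]
      have h1 := ha.2
      have h2 := hb.2
      nlinarith [mul_le_mul_of_nonneg_left h1 hs, mul_le_mul_of_nonneg_left h2 ht']
    rw [real_inner_smul_right]
    have h3 : ‖s • a + t' • b‖ * t ≤ ⟪k₀, s • a + t' • b⟫ := by nlinarith [ht0.le]
    have h4 := mul_le_mul_of_nonneg_left h3 (inv_pos.mpr hN).le
    have h5 : ‖s • a + t' • b‖⁻¹ * (‖s • a + t' • b‖ * t) = t := by
      field_simp
    linarith
  have hZanti : ∀ x ∈ Z, -x ∉ Z := fun x hx hx' => hanti x hx.1 hx'.1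
  have hZint : ∃ x ∈ Z, ∃ ε' : ℝ, 0 < ε' ∧ Metric.ball x ε' ∩ unitSphere (d+1) ⊆ Z := by
    refine ⟨xh, hxhZ, min ε (⟪k₀, xh⟫ - t), lt_min hε (by linarith), ?_⟩
    rintro y ⟨hyb, hys⟩
    have hybe : y ∈ Metric.ball xh ε := Metric.ball_subset_ball (min_le_left _ _) hyb
    refine ⟨hball ⟨hybe, hys⟩, ?_⟩
    have h1 : ‖y - xh‖ < min ε (⟪k₀, xh⟫ - t) := by
      rwa [Metric.mem_ball, dist_eq_norm] at hyb
    have h2 : ⟪k₀, xh - y⟫ ≤ ‖xh - y‖ := by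
      have h3 := real_inner_le_norm k₀ (xh - y)
      rwa [hk₀u, one_mul] at h3
    have h4 : ⟪k₀, y⟫ = ⟪k₀, xh⟫ - ⟪k₀, xh - y⟫ := by
      rw [inner_sub_right]
      ring
    have h5 : ‖xh - y‖ < ⟪k₀, xh⟫ - t := by
      rw [norm_sub_rev]
      exact lt_of_lt_of_le h1 (min_le_right _ _)
    linarith
  have hZbody : IsSphConvexBody Z := ⟨hZclosed, ⟨hZs, hZanti, hZarc⟩, hZint⟩
  have hZne : Z ≠ R := by
    intro h
    have h1 : p₀ ∈ Z := h ▸ hp₀R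
    have h2 := h1.2
    rw [hp₀0] at h2
    linarith
  have hthZ : thickness Z < thickness R := hred Z hZbody hZsub hZne
  -- extract a wide supporting pair of Z
  obtain ⟨v₁, v₂, hv₁, hv₂, hvne, hvne'⟩ := two_supporters (by omega : 3 ≤ d + 1) hZcomp
    ⟨xh, hxhZ⟩ hZs hk₀u ht0 (fun x hx => hx.2)
  have hTne : (Tset Z).Nonempty := ⟨widthAt Z v₁, v₁, hv₁, rfl⟩
  obtain ⟨τ₂, hτ₂mem, hτ₂⟩ := exists_lt_of_csInf_lt hTne hthZ
  obtain ⟨g, hgS, rfl⟩ := hτ₂mem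
  have hWZne : ∃ v, Supports v Z ∧ v ≠ g ∧ v ≠ -g := by
    rcases eq_or_ne v₁ g with rfl | h1
    · refine ⟨v₂, hv₂, fun h => hvne h.symm, fun h => hvne' ?_⟩
      rw [h]
      simp
    rcases eq_or_ne v₁ (-g) with heq | h2
    · refine ⟨v₂, hv₂, ?_, ?_⟩
      · intro h
        exact hvne' (by rw [heq, h])
      · intro h
        exact hvne (heq.trans h.symm)
    · exact ⟨v₁, hv₁, h1, h2⟩
  obtain ⟨v, hvS, hvg, hvg'⟩ := hWZne
  have hWne2 : (Wset Z g).Nonempty := ⟨luneThickness g v, v, hvS, hvg, hvg', rfl⟩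
  obtain ⟨τ₃, hτ₃mem, hτ₃⟩ := exists_lt_of_csInf_lt hWne2 hτ₂
  obtain ⟨w, hwS, hwg, hwg', rfl⟩ := hτ₃mem
  have hgu : ‖g‖ = 1 := supports_norm hgS
  have hwu : ‖w‖ = 1 := supports_norm hwS
  have hlt : luneThickness g w < thickness R := hτ₃
  rw [luneThickness_eq hgu hwu (Ne.symm hwg) (ne_neg_symm hwg')] at hlt
  have harcgw : D < Real.arccos ⟪g, w⟫ := by
    rw [hD]
    linarith
  have hghlt : ⟪g, w⟫ < Real.cos D := by
    have h1 : D ∈ Set.Icc 0 π := ⟨hD0.le, hDπ⟩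
    have h2 : Real.arccos ⟪g, w⟫ ∈ Set.Icc 0 π :=
      ⟨Real.arccos_nonneg _, Real.arccos_le_pi _⟩
    have h3 := Real.strictAntiOn_cos h1 h2 harcgw
    rwa [Real.cos_arccos (neg_one_le_inner hgu hwu) (inner_le_one hgu hwu)] at h3
  -- decomposition of g and w
  have hconeclosed : IsClosed (coneR R) := coneR_closed hcomp hRs ⟨xh, hxhR⟩
  have hconeconv : Convex ℝ (coneR R) := coneR_convex hRs hanti harc
  have hgZpos : ∀ x ∈ Z, 0 ≤ ⟪g, x⟫ := ((supports_iff hZs).mp hgS).2.1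
  have hwZpos : ∀ x ∈ Z, 0 ≤ ⟪w, x⟫ := ((supports_iff hZs).mp hwS).2.1
  have hdecg : g ∈ closure (Cstar R + Kstar k₀ t) :=
    dec hconeclosed hconeconv hk₀u ht0 ht1 hRs (fun x hx hxt => hgZpos x ⟨hx, hxt⟩)
  have hdecw : w ∈ closure (Cstar R + Kstar k₀ t) :=
    dec hconeclosed hconeconv hk₀u ht0 ht1 hRs (fun x hx hxt => hwZpos x ⟨hx, hxt⟩)
  -- pass to the limit
  have hkey : Real.cos D ≤ ⟪g, w⟫ := by
    obtain ⟨as, has, hastend⟩ := mem_closure_iff_seq_limit.mp hdecg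
    obtain ⟨bs, hbs, hbstend⟩ := mem_closure_iff_seq_limit.mp hdecw
    have h1 : Filter.Tendsto (fun m => ⟪as m, bs m⟫) Filter.atTop (nhds ⟪g, w⟫) :=
      hastend.inner hbstend
    have h2 : Filter.Tendsto (fun m => Real.cos D * (‖as m‖ * ‖bs m‖)) Filter.atTop
        (nhds (Real.cos D * (‖g‖ * ‖w‖))) :=
      tendsto_const_nhds.mul (((continuous_norm.tendsto g).comp hastend).mul
        ((continuous_norm.tendsto w).comp hbstend))
    have h3 := le_of_tendsto_of_tendsto' h2 h1 (fun m => hgen _ (has m) _ (hbs m))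
    rwa [hgu, hwu, mul_one, mul_one] at h3
  linarith
end
end
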